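/- arXiv:2206.04815 — 7 statements merged into one kernel-verified Lean document; each statement's English description precedes it below -/
import Mathlib

section
/- Let G = ([n], E) be a directed graph and S_G ≤ M(n, F) its graphical matrix space. Then G is acyclic if and only if every matrix in S_G is nilpotent. -/
open Matrix

/-- The graphical matrix space of a directed graph with arc set `E ⊆ [n] × [n]`. -/
def graphSpace (F : Type*) [Field F] {n : ℕ} (E : Finset (Fin n × Fin n)) :
    Submodule F (Matrix (Fin n) (Fin n) F) :=
  Submodule.span F ((fun e => Matrix.single e.1 e.2 (1 : F)) '' (E : Set (Fin n × Fin n)))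

/-- A directed graph has a cycle: a closed walk of positive length whose
vertices `v 0, …, v (k-1)` are pairwise distinct. -/
def HasCycle {n : ℕ} (E : Finset (Fin n × Fin n)) : Prop :=
  ∃ (k : ℕ) (v : ℕ → Fin n), 0 < k ∧ v k = v 0 ∧
    (∀ i < k, (v i, v (i + 1)) ∈ E) ∧ (∀ i < k, ∀ j < k, v i = v j → i = j)

/-- Members of the graphical matrix space are supported on `E`. -/
lemma graphSpace_support (F : Type*) [Field F] {n : ℕ} (E : Finset (Fin n × Fin n))
    {B : Matrix (Fin n) (Fin n) F} (hB : B ∈ graphSpace F E) :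
    ∀ i j, (i, j) ∉ E → B i j = 0 := by
  induction hB using Submodule.span_induction with
  | mem x hx =>
    obtain ⟨e, he, rfl⟩ := hx
    intro i j hij
    have : (e.1, e.2) ≠ (i, j) := by rintro h; exact hij (h ▸ (by simpa using he))
    simp only [Matrix.single, Matrix.of_apply]
    rw [if_neg]
    rintro ⟨h1, h2⟩
    exact this (by rw [h1, h2])
  | zero => simp
  | add x y hx hy ihx ihy => intro i j h; simp [Matrix.add_apply, ihx i j h, ihy i j h]
  | smul a x hx ihx => intro i j h; simp [Matrix.smul_apply, ihx i j h]

/-- Any closed walk contains a simple cycle. -/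
lemma hasCycle_of_walk {n : ℕ} (E : Finset (Fin n × Fin n)) :
    ∀ k, 0 < k → ∀ v : ℕ → Fin n, v k = v 0 → (∀ i < k, (v i, v (i + 1)) ∈ E) →
      HasCycle E := by
  intro k
  induction k using Nat.strong_induction_on with
  | _ k ih =>
    intro hk v hclose hedge
    by_cases hinj : ∀ i < k, ∀ j < k, v i = v j → i = j
    · exact ⟨k, v, hk, hclose, hedge, hinj⟩
    · push_neg at hinj
      obtain ⟨i, hi, j, hj, hvij, hij⟩ := hinj
      -- wlog i < j
      rcases Nat.lt_or_ge i j with hlt | hge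
      · refine ih (j - i) (by omega) (by omega) (fun t => v (i + t)) ?_ ?_
        · show v (i + (j - i)) = v (i + 0)
          have : i + (j - i) = j := by omega
          rw [this, Nat.add_zero]; exact hvij.symm
        · intro t ht
          have : i + t < k := by omega
          have h := hedge (i + t) this
          simpa [Nat.add_assoc] using h
      · have hlt : j < i := by omega
        refine ih (i - j) (by omega) (by omega) (fun t => v (j + t)) ?_ ?_
        · show v (j + (i - j)) = v (j + 0)
          have : j + (i - j) = i := by omega
          rw [this, Nat.add_zero]; exact hvij
        · intro t ht
          have : j + t < k := by omega
          have h := hedge (j + t) this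
          simpa [Nat.add_assoc] using h

lemma walk_of_transGen {n : ℕ} (E : Finset (Fin n × Fin n)) {a b : Fin n}
    (h : Relation.TransGen (fun x y => (x, y) ∈ E) a b) :
    ∃ (k : ℕ) (v : ℕ → Fin n), 0 < k ∧ v 0 = a ∧ v k = b ∧ ∀ i < k, (v i, v (i + 1)) ∈ E := by
  induction h with
  | @single b' hr =>
    refine ⟨1, fun t => if t = 0 then a else b', one_pos, by simp, by simp, ?_⟩
    intro i hi
    interval_cases i
    simpa using hr
  | @tail b c hab hr ih =>
    obtain ⟨k, v, hk, h0, hkb, hedge⟩ := ih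
    refine ⟨k + 1, fun t => if t = k + 1 then c else v t, by omega, ?_, by simp, ?_⟩
    · simp only [if_neg (by omega : ¬ (0 = k + 1))]; exact h0
    · intro i hi
      rcases Nat.lt_or_ge i k with hik | hik
      · simp only [if_neg (by omega : ¬ (i = k + 1)), if_neg (by omega : ¬ (i + 1 = k + 1))]
        exact hedge i hik
      · have h1 : i = k := by omega
        rw [h1]
        simp only [if_neg (by omega : ¬ (k = k + 1)), if_pos rfl]
        rw [hkb]; exact hr

/-- `G` is acyclic iff every matrix in `S_G` is nilpotent. -/
theorem stmt_3 (F : Type*) [Field F] (n : ℕ) (E : Finset (Fin n × Fin n)) :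
    ¬ HasCycle E ↔ ∀ B ∈ graphSpace F E, IsNilpotent B := by
  constructor
  · -- acyclic → nilpotent
    intro hacyc B hB
    set r : Fin n → Fin n → Prop := fun x y => (x, y) ∈ E with hr
    have hirr : ∀ a : Fin n, ¬ Relation.TransGen r a a := by
      intro a ha
      obtain ⟨k, v, hk, h0, hka, hedge⟩ := walk_of_transGen E ha
      exact hacyc (hasCycle_of_walk E k hk v (by rw [hka, h0]) hedge)
    classical
    set f : Fin n → ℕ := fun i => (Finset.univ.filter (fun l => Relation.TransGen r l i)).card
      with hf
    have hmono : ∀ i j : Fin n, r i j → f i < f j := by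
      intro i j hij
      apply Finset.card_lt_card
      constructor
      · intro l hl
        simp only [Finset.mem_filter, Finset.mem_univ, true_and] at hl ⊢
        exact hl.tail hij
      · intro hsub
        have := hsub (Finset.mem_filter.mpr ⟨Finset.mem_univ i, Relation.TransGen.single hij⟩)
        simp only [Finset.mem_filter, Finset.mem_univ, true_and] at this
        exact hirr i this
    have hbound : ∀ j : Fin n, f j < n := by
      intro j
      have : (Finset.univ.filter (fun l => Relation.TransGen r l j)) ⊂ Finset.univ := by
        refine Finset.ssubset_univ_iff.mpr ?_
        intro h
        have : j ∈ Finset.univ.filter (fun l => Relation.TransGen r l j) := by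
          rw [h]; exact Finset.mem_univ j
        simp only [Finset.mem_filter, Finset.mem_univ, true_and] at this
        exact hirr j this
      simpa using Finset.card_lt_card this
    have hsupp := graphSpace_support F E hB
    have key : ∀ m : ℕ, ∀ i j : Fin n, (B ^ (m + 1)) i j ≠ 0 → f i + m < f j := by
      intro m
      induction m with
      | zero =>
        intro i j h
        simp only [zero_add, pow_one] at h
        have : (i, j) ∈ E := by by_contra hc; exact h (hsupp i j hc)
        simpa using hmono i j this
      | succ m ihm =>
        intro i j h
        rw [pow_succ, Matrix.mul_apply] at h
        obtain ⟨l, _, hl⟩ := Finset.exists_ne_zero_of_sum_ne_zero h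
        have h1 : (B ^ (m + 1)) i l ≠ 0 := fun hc => hl (by rw [hc, zero_mul])
        have h2 : B l j ≠ 0 := fun hc => hl (by rw [hc, mul_zero])
        have := ihm i l h1
        have hE : (l, j) ∈ E := by by_contra hc; exact h2 (hsupp l j hc)
        have := hmono l j hE
        omega
    refine ⟨n + 1, ?_⟩
    ext i j
    by_contra h
    have h1 := key n i j h
    have h2 := hbound j
    omega
  · -- has cycle → not all nilpotent
    intro hall
    intro hcyc
    obtain ⟨k, v, hk, hclose, hedge, hinj⟩ := hcyc
    classical
    set B : Matrix (Fin n) (Fin n) F :=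
      ∑ i ∈ Finset.range k, Matrix.single (v i) (v (i + 1)) (1 : F) with hBdef
    have hBmem : B ∈ graphSpace F E := by
      apply Submodule.sum_mem
      intro i hi
      apply Submodule.subset_span
      exact ⟨(v i, v (i + 1)), by simpa using hedge i (Finset.mem_range.mp hi), rfl⟩
    set w : Fin n → F := fun a => if ∃ i < k, v i = a then 1 else 0 with hw
    have hwcyc : ∀ i, i ≤ k → w (v i) = 1 := by
      intro i hi
      rcases Nat.lt_or_ge i k with h | h
      · simp only [hw]; rw [if_pos ⟨i, h, rfl⟩]
      · have : i = k := by omega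
        subst this
        simp only [hw, hclose]; rw [if_pos ⟨0, hk, rfl⟩]
    have hmul : B.mulVec w = w := by
      funext a
      rw [Matrix.mulVec, dotProduct]
      have expand : ∀ x : Fin n, B a x = ∑ i ∈ Finset.range k,
          (if v i = a ∧ v (i + 1) = x then (1 : F) else 0) := by
        intro x
        rw [hBdef, Matrix.sum_apply]
        congr 1
      calc ∑ x, B a x * w x
          = ∑ x, ∑ i ∈ Finset.range k,
              (if v i = a ∧ v (i + 1) = x then (1 : F) else 0) * w x := by
            congr 1; funext x; rw [expand x]; rw [Finset.sum_mul]
        _ = ∑ i ∈ Finset.range k, ∑ x,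
              (if v i = a ∧ v (i + 1) = x then (1 : F) else 0) * w x := by
            rw [Finset.sum_comm]
        _ = ∑ i ∈ Finset.range k, (if v i = a then (1 : F) else 0) := by
            refine Finset.sum_congr rfl (fun i hi => ?_)
            rw [Finset.sum_eq_single (v (i + 1))]
            · by_cases hva : v i = a
              · rw [if_pos ⟨hva, rfl⟩, if_pos hva, one_mul,
                  hwcyc (i + 1) (Finset.mem_range.mp hi)]
              · rw [if_neg (fun hc => hva hc.1), if_neg hva, zero_mul]
            · intro x _ hx
              rw [if_neg (fun hc => hx hc.2.symm), zero_mul]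
            · intro hx; exact absurd (Finset.mem_univ _) hx
        _ = w a := by
            by_cases ha : ∃ i < k, v i = a
            · obtain ⟨i0, hi0, hvi0⟩ := ha
              rw [Finset.sum_eq_single i0]
              · rw [if_pos hvi0, hw]
                simp only
                rw [if_pos ⟨i0, hi0, hvi0⟩]
              · intro i hi hne
                rw [if_neg]
                intro hc
                exact hne (hinj i (Finset.mem_range.mp hi) i0 hi0 (hc.trans hvi0.symm))
              · intro h; exact absurd (Finset.mem_range.mpr hi0) h
            · rw [hw]
              simp only
              rw [if_neg ha, Finset.sum_eq_zero]
              intro i hi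
              rw [if_neg]
              intro hc
              exact ha ⟨i, Finset.mem_range.mp hi, hc⟩
    have hpow : ∀ m : ℕ, (B ^ m).mulVec w = w := by
      intro m
      induction m with
      | zero => simp
      | succ m ihm => rw [pow_succ, ← Matrix.mulVec_mulVec, hmul, ihm]
    obtain ⟨m, hm⟩ := hall B hBmem
    have : w = 0 := by rw [← hpow m, hm, Matrix.zero_mulVec]
    have hw0 : w (v 0) = 1 := hwcyc 0 (le_of_lt hk)
    rw [this] at hw0
    simp at hw0
end

section
/- Let G = ([n], E) be a directed graph, S_G ≤ M(n, F) its graphical matrix space, and r ∈ {0, 1, …, n}. Then every collection of pairwise vertex-disjoint directed cycles in G covers at most n − r vertices if and only if every matrix B ∈ S_G has the property that x^r divides the characteristic polynomial of B (i.e., B has at least r zero eigenvalues counted with algebraic multiplicity). -/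
open Matrix Polynomial

lemma graphSpace_apply_eq_zero {F : Type*} [Field F] {n : ℕ} {E : Finset (Fin n × Fin n)}
    {B : Matrix (Fin n) (Fin n) F} (hB : B ∈ graphSpace F E) {i j : Fin n}
    (h : (i, j) ∉ E) : B i j = 0 := by
  induction hB using Submodule.span_induction with
  | mem x hx =>
    obtain ⟨e, he, rfl⟩ := hx
    have hne : ¬(e.1 = i ∧ e.2 = j) := by
      rintro ⟨h1, h2⟩
      exact h (by rwa [← h1, ← h2, Prod.mk.eta])
    simp [Matrix.single, hne]
  | zero => simp
  | add x y hx hy ihx ihy => simp [Matrix.add_apply, ihx, ihy]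
  | smul a x hx ihx => simp [Matrix.smul_apply, ihx]

/-- Every collection of pairwise vertex-disjoint directed cycles in `G` covers at most
`n - r` vertices iff every matrix in `S_G` has at least `r` zero eigenvalues, i.e.
`x ^ r` divides its characteristic polynomial.

A collection of vertex-disjoint cycles covering a vertex set `V` is encoded by a
permutation `σ` of `[n]` fixing the complement of `V` pointwise, all of whose arcs
within `V` belong to `E` (self-loops being cycles of length 1). -/
theorem stmt_5 (F : Type*) [Field F] (n : ℕ) (E : Finset (Fin n × Fin n))
    (r : ℕ) (hr : r ≤ n) :
    (∀ (V : Finset (Fin n)) (σ : Equiv.Perm (Fin n)),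
        (∀ i ∉ V, σ i = i) → (∀ i ∈ V, (i, σ i) ∈ E) → V.card ≤ n - r) ↔
      (∀ B ∈ graphSpace F E, (X : F[X]) ^ r ∣ B.charpoly) := by
  classical
  constructor
  · -- combinatorial condition implies divisibility
    intro h B hB
    rw [Matrix.charpoly, Matrix.det_apply]
    apply Finset.dvd_sum
    intro τ _
    rw [Units.smul_def, zsmul_eq_mul]
    apply Dvd.dvd.mul_left
    by_cases hc : ∃ i, τ i ≠ i ∧ B (τ i) i = 0
    · obtain ⟨i, hne, h0⟩ := hc
      have hz : charmatrix B (τ i) i = 0 := by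
        rw [charmatrix_apply_ne _ _ _ hne, h0, map_zero, neg_zero]
      rw [show (∏ i, B.charmatrix (τ i) i) = 0 from Finset.prod_eq_zero (Finset.mem_univ i) hz]
      exact dvd_zero _
    · push_neg at hc
      set Z : Finset (Fin n) := Finset.univ.filter (fun i => τ i = i ∧ B i i = 0) with hZdef
      set V : Finset (Fin n) := Finset.univ.filter (fun i => ¬(τ i = i ∧ B i i = 0)) with hVdef
      have hVcard : V.card ≤ n - r := by
        apply h V τ⁻¹
        · intro i hi
          simp only [hVdef, Finset.mem_filter, Finset.mem_univ, true_and, not_not] at hi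
          rw [Equiv.Perm.inv_eq_iff_eq, hi.1]
        · intro i hi
          have hji : τ (τ⁻¹ i) = i := τ.apply_symm_apply i
          by_cases hfix : τ (τ⁻¹ i) = τ⁻¹ i
          · have hii : τ⁻¹ i = i := hfix.symm.trans hji
            rw [hii]
            simp only [hVdef, Finset.mem_filter, Finset.mem_univ, true_and] at hi
            have hBii : B i i ≠ 0 := by
              intro h0
              exact hi ⟨by rw [← hii, hfix, hii], h0⟩
            by_contra hE
            exact hBii (graphSpace_apply_eq_zero hB hE)
          · have := hc _ hfix
            rw [hji] at this
            by_contra hE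
            exact this (graphSpace_apply_eq_zero hB hE)
      have hsum : Z.card + V.card = n := by
        rw [hZdef, hVdef, Finset.card_filter_add_card_filter_not]
        simp
      have hZcard : r ≤ Z.card := by omega
      have hprod : (∏ i, charmatrix B (τ i) i) =
          X ^ Z.card * ∏ i ∈ V, charmatrix B (τ i) i := by
        rw [← Finset.prod_filter_mul_prod_filter_not Finset.univ
          (fun i => τ i = i ∧ B i i = 0) (fun i => charmatrix B (τ i) i)]
        congr 1
        rw [Finset.prod_congr rfl (fun i hi => ?_), Finset.prod_const, hZdef]
        simp only [Finset.mem_filter, Finset.mem_univ, true_and] at hi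
        rw [hi.1, charmatrix_apply_eq, hi.2, map_zero, sub_zero]
      rw [hprod]
      exact Dvd.dvd.mul_right (pow_dvd_pow _ hZcard) _
  · -- divisibility implies combinatorial condition
    intro halg V σ hfix harcs
    by_contra hcard
    push_neg at hcard
    set B : Matrix (Fin n) (Fin n) F := ∑ i ∈ V, Matrix.single i (σ i) (1 : F) with hBdef
    have hBmem : B ∈ graphSpace F E := by
      apply Submodule.sum_mem
      intro i hi
      exact Submodule.subset_span ⟨(i, σ i), harcs i hi, rfl⟩
    have hBapply : ∀ i j, B i j = if i ∈ V ∧ j = σ i then 1 else 0 := by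
      intro i j
      rw [hBdef, Matrix.sum_apply]
      rw [Finset.sum_congr rfl (fun a _ => ?sub), Finset.sum_ite_eq' V i
        (fun _ => if j = σ i then (1:F) else 0)]
      case sub =>
        show Matrix.single a (σ a) (1:F) i j = if a = i then (if j = σ i then 1 else 0) else 0
        by_cases ha : a = i
        · subst ha
          by_cases hj : j = σ a <;> simp [Matrix.single, hj, eq_comm]
        · simp [Matrix.single, ha, fun h : a = i => ha h]
      by_cases hiV : i ∈ V <;> by_cases hj : j = σ i <;> simp [hiV, hj]
    have hσV : ∀ i : Fin n, i ∈ V ↔ σ i ∈ V := by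
      intro i
      constructor
      · intro hi
        by_contra hσi
        have := hfix _ hσi
        have : σ i = i := σ.injective this
        rw [this] at hσi
        exact hσi hi
      · intro hσi
        by_contra hi
        rw [hfix _ hi] at hσi
        exact hi hσi
    set σ' : Equiv.Perm {x : Fin n // x ∈ V} := σ.subtypePerm (fun i => (hσV i).symm) with hσ'def
    set A : Matrix {x : Fin n // x ∈ V} {x : Fin n // x ∈ V} F := σ'.permMatrix F with hAdef
    set e : {x : Fin n // x ∈ V} ⊕ {x : Fin n // ¬ x ∈ V} ≃ Fin n :=
      Equiv.sumCompl (· ∈ V) with hedef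
    have hreindex : Matrix.reindex e.symm e.symm B = Matrix.fromBlocks A 0 0 0 := by
      ext x y
      rcases x with x | x <;> rcases y with y | y <;>
        simp only [Matrix.reindex_apply, Matrix.submatrix_apply, Equiv.symm_symm, hedef,
          Equiv.sumCompl_apply_inl, Equiv.sumCompl_apply_inr, Matrix.fromBlocks_apply₁₁,
          Matrix.fromBlocks_apply₁₂, Matrix.fromBlocks_apply₂₁, Matrix.fromBlocks_apply₂₂,
          Matrix.zero_apply, hBapply]
      · rw [hAdef, Equiv.Perm.permMatrix, PEquiv.toMatrix_apply]
        simp only [Equiv.toPEquiv_apply, Option.mem_def, Option.some.injEq]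
        have : (↑x ∈ V ∧ (y : Fin n) = σ ↑x) ↔ σ' x = y := by
          constructor
          · rintro ⟨-, h2⟩
            exact Subtype.ext h2.symm
          · intro h
            exact ⟨x.2, congrArg Subtype.val h.symm⟩
        exact if_congr this rfl rfl
      · have : ¬((x : Fin n) ∈ V ∧ (y : Fin n) = σ ↑x) := by
          rintro ⟨-, h2⟩
          exact y.2 (h2 ▸ (hσV x).mp x.2)
        rw [if_neg this]
      · simp [x.2]
      · simp [x.2]
    have hcharB : B.charpoly = A.charpoly * X ^ (n - V.card) := by
      have h1 : B.charpoly = (Matrix.fromBlocks A (0 : Matrix _ {x : Fin n // ¬ x ∈ V} F) 0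
          (0 : Matrix {x : Fin n // ¬ x ∈ V} _ F)).charpoly := by
        rw [← hreindex, Matrix.charpoly_reindex]
      rw [h1, Matrix.charpoly_fromBlocks_zero₂₁]
      congr 1
      -- charpoly of the zero matrix
      have hzero : charmatrix (0 : Matrix {x : Fin n // ¬ x ∈ V} {x : Fin n // ¬ x ∈ V} F)
          = Matrix.diagonal (fun _ => (X : F[X])) := by
        ext i j
        by_cases h : i = j
        · subst h; simp
        · simp [charmatrix_apply_ne _ _ _ h, Matrix.diagonal_apply_ne _ h]
      rw [Matrix.charpoly, hzero, Matrix.det_diagonal, Finset.prod_const, Finset.card_univ]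
      congr 1
      rw [Fintype.card_subtype_compl, Fintype.card_fin, Fintype.card_coe]
    have hdetA : A.det ≠ 0 := by
      rw [hAdef, Matrix.det_permutation]
      rcases Int.units_eq_one_or (Equiv.Perm.sign σ') with h | h <;> simp [h]
    have hcoeff : A.charpoly.coeff 0 ≠ 0 := by
      intro h0
      apply hdetA
      rw [Matrix.det_eq_sign_charpoly_coeff, h0, mul_zero]
    have hdvd := halg B hBmem
    rw [hcharB] at hdvd
    have hm : V.card ≤ n := by
      simpa using Finset.card_le_card (Finset.subset_univ V)
    obtain ⟨s, hs⟩ : ∃ s, r = (n - V.card) + (s + 1) := ⟨r - (n - V.card) - 1, by omega⟩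
    rw [hs, pow_add] at hdvd
    have hXpow : (X : F[X]) ^ (n - V.card) ≠ 0 := pow_ne_zero _ X_ne_zero
    have hdvd2 : (X : F[X]) ^ (s + 1) ∣ A.charpoly := by
      rw [mul_comm A.charpoly] at hdvd
      exact (mul_dvd_mul_iff_left hXpow).mp hdvd
    have : (X : F[X]) ∣ A.charpoly := dvd_trans (dvd_pow_self X (Nat.succ_ne_zero s)) hdvd2
    rw [Polynomial.X_dvd_iff] at this
    exact hcoeff this
end

section
/- Let G = ([n], E) be a directed graph and S_G ≤ M(n, F) its graphical matrix space. Then G is strongly connected if and only if S_G is irreducible (has no invariant subspace other than 0 and F^n). -/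
open Matrix

/-- A directed graph is strongly connected if from every nonempty proper vertex subset
there is an arc leaving it. -/
def StronglyConnected {n : ℕ} (E : Finset (Fin n × Fin n)) : Prop :=
  ∀ S : Finset (Fin n), S.Nonempty → S ≠ Finset.univ →
    ∃ i ∈ S, ∃ j, j ∉ S ∧ (i, j) ∈ E

lemma vecMul_stdBasis_aux (F : Type*) [Field F] {n : ℕ} (u : Fin n → F) (i j : Fin n) :
    Matrix.vecMul u (Matrix.single i j (1:F)) = u i • (Pi.single j 1 : Fin n → F) := by
  ext k
  simp [Matrix.vecMul, dotProduct, Matrix.single, Pi.single_apply, ite_and,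
    mul_comm, eq_comm]

lemma sum_single_aux (F : Type*) [Field F] {n : ℕ} (v : Fin n → F) :
    ∑ j, v j • (Pi.single j 1 : Fin n → F) = v := by
  have h : ∀ j : Fin n, v j • (Pi.single j 1 : Fin n → F) = Pi.single j (v j) := by
    intro j; ext k; simp [Pi.single_apply, mul_ite]
  simp_rw [h]
  exact Finset.univ_sum_single v

/-- `G` is strongly connected iff `S_G` is irreducible: the only subspaces of `F^n`
(row vectors, acted on from the right) invariant under every matrix of `S_G` are `0`
and `F^n`. -/
theorem stmt_11 (F : Type*) [Field F] (n : ℕ) (E : Finset (Fin n × Fin n)) :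
    StronglyConnected E ↔
      ∀ U : Submodule F (Fin n → F),
        (∀ B ∈ graphSpace F E, ∀ u ∈ U, Matrix.vecMul u B ∈ U) →
          U = ⊥ ∨ U = ⊤ := by
  classical
  constructor
  · intro hSC U hU
    by_cases hbot : U = ⊥
    · exact Or.inl hbot
    right
    -- get a nonzero vector
    obtain ⟨u, hu, hune⟩ : ∃ u ∈ U, u ≠ 0 := by
      by_contra h
      push_neg at h
      exact hbot (le_antisymm (fun x hx => by simpa using h x hx) bot_le)
    obtain ⟨i, hi⟩ : ∃ i, u i ≠ 0 := by
      by_contra h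
      push_neg at h
      exact hune (funext h)
    -- key: edges propagate basis vectors
    have hEdge : ∀ (a b : Fin n), (a, b) ∈ E → ∀ w ∈ U, w a ≠ 0 →
        (Pi.single b 1 : Fin n → F) ∈ U := by
      intro a b hab w hw hwa
      have hB : Matrix.single a b (1:F) ∈ graphSpace F E :=
        Submodule.subset_span ⟨(a, b), by simpa using hab, rfl⟩
      have h1 : w a • (Pi.single b 1 : Fin n → F) ∈ U := by
        rw [← vecMul_stdBasis_aux]
        exact hU _ hB w hw
      have h2 := U.smul_mem (w a)⁻¹ h1
      rwa [smul_smul, inv_mul_cancel₀ hwa, one_smul] at h2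
    set T : Finset (Fin n) := Finset.univ.filter (fun j => (Pi.single j 1 : Fin n → F) ∈ U)
      with hT
    have hmemT : ∀ j, j ∈ T ↔ (Pi.single j 1 : Fin n → F) ∈ U := by
      intro j; simp [hT]
    -- T is nonempty
    have hTne : T.Nonempty := by
      by_cases hsing : ({i} : Finset (Fin n)) = Finset.univ
      · refine ⟨i, (hmemT i).2 ?_⟩
        have heq : (Pi.single i 1 : Fin n → F) = (u i)⁻¹ • u := by
          funext k
          have hk : k = i := by
            have : k ∈ ({i} : Finset (Fin n)) := hsing ▸ Finset.mem_univ k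
            simpa using this
          subst hk
          simp [inv_mul_cancel₀ hi]
        rw [heq]
        exact U.smul_mem _ hu
      · obtain ⟨a, ha, b, hb, hab⟩ := hSC {i} ⟨i, Finset.mem_singleton_self i⟩ hsing
        have ha' : a = i := by simpa using ha
        subst ha'
        exact ⟨b, (hmemT b).2 (hEdge a b hab u hu hi)⟩
    -- T is all of univ
    have hTuniv : T = Finset.univ := by
      by_contra hne
      obtain ⟨a, ha, b, hb, hab⟩ := hSC T hTne hne
      have hau : (Pi.single a 1 : Fin n → F) ∈ U := (hmemT a).1 ha
      have : (Pi.single b 1 : Fin n → F) ∈ U :=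
        hEdge a b hab _ hau (by simp)
      exact hb ((hmemT b).2 this)
    -- conclude U = ⊤
    refine le_antisymm le_top fun v _ => ?_
    rw [← sum_single_aux F v]
    refine U.sum_mem fun j _ => U.smul_mem _ ?_
    exact (hmemT j).1 (hTuniv ▸ Finset.mem_univ j)
  · intro hIrr S hSne hSuniv
    by_contra h
    push_neg at h
    -- the coordinate subspace on S is invariant
    set U : Submodule F (Fin n → F) :=
      { carrier := {v | ∀ j ∉ S, v j = 0}
        add_mem' := fun {a b} ha hb j hj => by simp [ha j hj, hb j hj]
        zero_mem' := fun j _ => rfl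
        smul_mem' := fun c {v} hv j hj => by simp [hv j hj] } with hUdef
    have hmemU : ∀ v, v ∈ U ↔ ∀ j ∉ S, v j = 0 := fun v => Iff.rfl
    have hinv : ∀ B ∈ graphSpace F E, ∀ u ∈ U, Matrix.vecMul u B ∈ U := by
      intro B hB
      induction hB using Submodule.span_induction with
      | mem x hx =>
        obtain ⟨⟨a, b⟩, hab, rfl⟩ := hx
        intro u hu
        rw [vecMul_stdBasis_aux]
        by_cases haS : a ∈ S
        · have hbS : b ∈ S := by
            by_contra hbS
            exact h a haS b hbS (by simpa using hab)
          intro j hj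
          have : j ≠ b := fun hjb => hj (hjb ▸ hbS)
          simp [Pi.single_apply, this]
        · have : u a = 0 := (hmemU u).1 hu a haS
          intro j hj
          simp [this]
      | zero => intro u hu; rw [Matrix.vecMul_zero]; exact U.zero_mem
      | add x y hx hy ihx ihy =>
        intro u hu
        rw [Matrix.vecMul_add]
        exact U.add_mem (ihx u hu) (ihy u hu)
      | smul c x hx ihx =>
        intro u hu
        have : Matrix.vecMul u (c • x) = c • Matrix.vecMul u x := by
          ext k; simp [Matrix.vecMul, dotProduct, Finset.mul_sum, mul_left_comm]
        rw [this]
        exact U.smul_mem c (ihx u hu)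
    rcases hIrr U hinv with hb | ht
    · obtain ⟨i, hiS⟩ := hSne
      have hiU : (Pi.single i 1 : Fin n → F) ∈ U := by
        intro j hj
        have : j ≠ i := fun hji => hj (hji ▸ hiS)
        simp [Pi.single_apply, this]
      rw [hb] at hiU
      have := Submodule.mem_bot F |>.1 hiU
      have h1 : (Pi.single i 1 : Fin n → F) i = 0 := by rw [this]; rfl
      simp at h1
    · obtain ⟨j, hjS⟩ : ∃ j, j ∉ S := by
        by_contra hall
        push_neg at hall
        exact hSuniv (Finset.eq_univ_iff_forall.2 hall)
      have hjU : (Pi.single j 1 : Fin n → F) ∈ U := ht ▸ Submodule.mem_top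
      have := (hmemU _).1 hjU j hjS
      simp at this
end

section
/- Let G = ([n], E) be a directed graph and S_G ≤ M(n, F) its graphical matrix space. Then the number of strongly connected components of G equals the length of any maximal chain 0 = U_0 < U_1 < ⋯ < U_k = F^n of invariant subspaces of S_G. -/
open Matrix

/-- There is a directed walk from `i` to `j` (possibly of length 0). -/
def Reach {n : ℕ} (E : Finset (Fin n × Fin n)) (i j : Fin n) : Prop :=
  ∃ (k : ℕ) (v : ℕ → Fin n), v 0 = i ∧ v k = j ∧ ∀ l < k, (v l, v (l + 1)) ∈ E

/-- A subspace of row vectors is invariant under the matrix space `S`. -/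
def MatSpaceInvariant {n : ℕ} (F : Type*) [Field F] (S : Submodule F (Matrix (Fin n) (Fin n) F))
    (U : Submodule F (Fin n → F)) : Prop :=
  ∀ B ∈ S, ∀ u ∈ U, Matrix.vecMul u B ∈ U

set_option maxHeartbeats 1000000
set_option synthInstance.maxHeartbeats 200000

namespace Stmt12

variable {F : Type*} [Field F] {n : ℕ} {E : Finset (Fin n × Fin n)}

lemma vecMul_std (u : Fin n → F) (i j : Fin n) :
    Matrix.vecMul u (Matrix.single i j 1) = u i • (Pi.single j 1 : Fin n → F) := by
  ext m
  simp only [Matrix.vecMul, dotProduct, Matrix.single, Pi.smul_apply,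
    Pi.single_apply, smul_eq_mul]
  rw [Finset.sum_eq_single i]
  · by_cases h : j = m <;> simp [h, eq_comm]
  · intro b _ hb
    simp [Ne.symm hb]
  · simp

lemma std_mem_graphSpace {i j : Fin n} (h : (i, j) ∈ E) :
    Matrix.single i j (1 : F) ∈ graphSpace F E :=
  Submodule.subset_span ⟨(i, j), h, rfl⟩

lemma reach_refl (i : Fin n) : Reach E i i :=
  ⟨0, fun _ => i, rfl, rfl, by omega⟩

lemma reach_trans {i j m : Fin n} (h1 : Reach E i j) (h2 : Reach E j m) : Reach E i m := by
  obtain ⟨k1, v1, hv10, hv1k, hv1e⟩ := h1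
  obtain ⟨k2, v2, hv20, hv2k, hv2e⟩ := h2
  refine ⟨k1 + k2, fun l => if l < k1 then v1 l else v2 (l - k1), ?_, ?_, ?_⟩
  · by_cases h : 0 < k1
    · simp [h, hv10]
    · have hk : k1 = 0 := by omega
      subst hk
      simp [h, hv20, hv1k.symm.trans hv10]
  · simp only [Nat.add_sub_cancel_left]
    have : ¬ (k1 + k2 < k1) := by omega
    simp [this, hv2k]
  · intro l hl
    by_cases h : l + 1 < k1
    · have hl1 : l < k1 := by omega
      simp only [h, hl1, if_true]
      exact hv1e l hl1
    · by_cases h2 : l < k1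
      · have hlk : l + 1 = k1 := by omega
        simp only [h, h2, if_true, if_false]
        rw [show l + 1 - k1 = 0 from by omega, hv20, ← hv1k, ← hlk]
        exact hv1e l h2
      · have : l + 1 - k1 = (l - k1) + 1 := by omega
        simp only [h, h2, if_false, this]
        exact hv2e (l - k1) (by omega)

lemma reach_of_edge {i j : Fin n} (h : (i, j) ∈ E) : Reach E i j :=
  ⟨1, fun l => if l = 0 then i else j, by simp, by simp, by
    intro l hl
    have : l = 0 := by omega
    simp [this, h]⟩

end Stmt12

section Part2
variable {F : Type*} [Field F] {n : ℕ} {E : Finset (Fin n × Fin n)}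
open Stmt12

namespace Stmt12

/-- Walk multiplication lemma. -/
lemma walk_smul_single_mem (W : Submodule F (Fin n → F))
    (hW : MatSpaceInvariant F (graphSpace F E) W) :
    ∀ k, 1 ≤ k → ∀ v : ℕ → Fin n, (∀ l < k, (v l, v (l + 1)) ∈ E) →
      ∀ u ∈ W, u (v 0) • (Pi.single (v k) 1 : Fin n → F) ∈ W := by
  intro k
  induction k with
  | zero => omega
  | succ k ih =>
    intro _ v hv u hu
    rcases Nat.eq_zero_or_pos k with hk | hk
    · subst hk
      have := hW _ (std_mem_graphSpace (hv 0 (by omega))) u hu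
      rwa [vecMul_std] at this
    · have h1 : u (v 0) • (Pi.single (v 1) 1 : Fin n → F) ∈ W := by
        have := hW _ (std_mem_graphSpace (hv 0 (by omega))) u hu
        rwa [vecMul_std] at this
      have := ih hk (fun l => v (l + 1)) (fun l hl => hv (l + 1) (by omega)) _ h1
      simpa [Pi.single_apply] using this

lemma single_mem_of_reach (W : Submodule F (Fin n → F))
    (hW : MatSpaceInvariant F (graphSpace F E) W) {i j : Fin n} (hne : i ≠ j)
    (hr : Reach E i j) {u : Fin n → F} (hu : u ∈ W) (hui : u i ≠ 0) :
    (Pi.single j 1 : Fin n → F) ∈ W := by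
  obtain ⟨k, v, hv0, hvk, hve⟩ := hr
  have hk : 1 ≤ k := by
    rcases Nat.eq_zero_or_pos k with h | h
    · exact absurd (hv0 ▸ h ▸ hvk) hne
    · exact h
  have := walk_smul_single_mem W hW k hk v hve u hu
  rw [hv0, hvk] at this
  have h2 := W.smul_mem (u i)⁻¹ this
  rwa [smul_smul, inv_mul_cancel₀ hui, one_smul] at h2

/-- The coordinate subspace supported on `s`. -/
def coordSub (F : Type*) [Field F] {n : ℕ} (s : Set (Fin n)) : Submodule F (Fin n → F) where
  carrier := {u | ∀ i, i ∉ s → u i = 0}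
  add_mem' := fun ha hb i hi => by simp [ha i hi, hb i hi]
  zero_mem' := fun i _ => rfl
  smul_mem' := fun c u hu i hi => by simp [hu i hi]

lemma mem_coordSub {s : Set (Fin n)} {u : Fin n → F} :
    u ∈ coordSub F s ↔ ∀ i, i ∉ s → u i = 0 := Iff.rfl

lemma single_mem_coordSub {s : Set (Fin n)} {j : Fin n} (hj : j ∈ s) (c : F) :
    (Pi.single j c : Fin n → F) ∈ coordSub F s := by
  rw [mem_coordSub]
  intro i hi
  have hne : i ≠ j := by rintro rfl; exact hi hj
  simp [Pi.single_apply, hne]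

lemma coordSub_le_of_single_mem {s : Set (Fin n)} {W : Submodule F (Fin n → F)}
    (h : ∀ j ∈ s, (Pi.single j 1 : Fin n → F) ∈ W) : coordSub F s ≤ W := by
  intro u hu
  have : u = ∑ j : Fin n, u j • (Pi.single j 1 : Fin n → F) := by
    ext m; simp [Pi.single_apply]
  rw [this]
  refine Submodule.sum_mem _ fun j _ => ?_
  by_cases hj : j ∈ s
  · exact W.smul_mem _ (h j hj)
  · rw [hu j hj]; simp

lemma coordSub_mono {s t : Set (Fin n)} (h : s ⊆ t) : coordSub F s ≤ coordSub F t :=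
  fun u hu i hi => hu i (fun hs => hi (h hs))

lemma coordSub_invariant {s : Set (Fin n)}
    (hs : ∀ i j : Fin n, (i, j) ∈ E → i ∈ s → j ∈ s) :
    MatSpaceInvariant F (graphSpace F E) (coordSub F s) := by
  intro B hB u hu
  induction hB using Submodule.span_induction with
  | mem B hBmem =>
    obtain ⟨⟨i, j⟩, hij, rfl⟩ := hBmem
    rw [vecMul_std]
    by_cases hi : i ∈ s
    · exact (coordSub F s).smul_mem _ (single_mem_coordSub (hs i j hij hi) 1)
    · rw [hu i hi]; simp
  | zero => rw [Matrix.vecMul_zero]; exact (coordSub F s).zero_mem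
  | add B C _ _ hB hC => rw [Matrix.vecMul_add]; exact (coordSub F s).add_mem hB hC
  | smul c B _ hB =>
    have : Matrix.vecMul u (c • B) = c • Matrix.vecMul u B := by
      ext j
      simp [Matrix.vecMul, dotProduct, Finset.mul_sum, mul_left_comm]
    rw [this]; exact (coordSub F s).smul_mem c hB

end Stmt12
end Part2

namespace Stmt12

variable (F : Type*) [Field F] {n : ℕ} (E : Finset (Fin n × Fin n))

/-- The subalgebra generated by the graphical matrix space. -/
def Adj : Subalgebra F (Matrix (Fin n) (Fin n) F) :=
  Algebra.adjoin F (graphSpace F E : Set (Matrix (Fin n) (Fin n) F))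

/-- The opposite ring, acting on row vectors from the right. -/
abbrev Rop := (Adj F E)ᵐᵒᵖ

noncomputable instance : Module (Rop F E) (Fin n → F) where
  smul r u := Matrix.vecMul u (r.unop : Matrix (Fin n) (Fin n) F)
  one_smul u := Matrix.vecMul_one u
  mul_smul r s u := by
    show Matrix.vecMul u (((r * s).unop : Adj F E) : Matrix (Fin n) (Fin n) F)
      = Matrix.vecMul (Matrix.vecMul u _) _
    rw [Matrix.vecMul_vecMul]
    rfl
  smul_zero r := Matrix.zero_vecMul _
  smul_add r u v := Matrix.add_vecMul _ u v
  add_smul r s u := by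
    show Matrix.vecMul u _ = Matrix.vecMul u _ + Matrix.vecMul u _
    rw [← Matrix.vecMul_add]
    rfl
  zero_smul u := Matrix.vecMul_zero u

lemma rop_smul_def (r : Rop F E) (u : Fin n → F) :
    r • u = Matrix.vecMul u ((MulOpposite.unop r : Adj F E) : Matrix (Fin n) (Fin n) F) :=
  rfl

variable {F E}

/-- Invariance extends from the generating space to the whole adjoined algebra. -/
lemma adj_invariant {U : Submodule F (Fin n → F)}
    (hU : MatSpaceInvariant F (graphSpace F E) U) :
    ∀ a ∈ Adj F E, ∀ u ∈ U, Matrix.vecMul u a ∈ U := by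
  intro a ha
  induction ha using Algebra.adjoin_induction with
  | mem B hB => exact fun u hu => hU B hB u hu
  | algebraMap c =>
    intro u hu
    have : Matrix.vecMul u (algebraMap F (Matrix (Fin n) (Fin n) F) c) = c • u := by
      ext j
      simp [Matrix.vecMul, dotProduct, Matrix.algebraMap_matrix_apply, mul_comm]
    rw [this]
    exact U.smul_mem c hu
  | add x y hx hy ihx ihy =>
    intro u hu
    rw [Matrix.vecMul_add]
    exact U.add_mem (ihx u hu) (ihy u hu)
  | mul x y hx hy ihx ihy =>
    intro u hu
    rw [← Matrix.vecMul_vecMul]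
    exact ihy _ (ihx u hu)

/-- An invariant subspace as a submodule over the opposite algebra. -/
def toR (U : Submodule F (Fin n → F)) (hU : MatSpaceInvariant F (graphSpace F E) U) :
    Submodule (Rop F E) (Fin n → F) where
  carrier := U
  add_mem' := U.add_mem
  zero_mem' := U.zero_mem
  smul_mem' r u hu := adj_invariant hU _ r.unop.2 u hu

@[simp] lemma mem_toR {U : Submodule F (Fin n → F)} {hU : MatSpaceInvariant F (graphSpace F E) U}
    {u : Fin n → F} : u ∈ toR U hU ↔ u ∈ U := Iff.rfl

/-- An `Rop`-submodule as an `F`-subspace. -/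
def ofR (W : Submodule (Rop F E) (Fin n → F)) : Submodule F (Fin n → F) where
  carrier := W
  add_mem' := W.add_mem
  zero_mem' := W.zero_mem
  smul_mem' c u hu := by
    have hc : Matrix.vecMul u ((algebraMap F (Matrix (Fin n) (Fin n) F) c)) = c • u := by
      ext j
      simp [Matrix.vecMul, dotProduct, Matrix.algebraMap_matrix_apply, mul_comm]
    have := W.smul_mem (MulOpposite.op (⟨algebraMap F _ c, (Adj F E).algebraMap_mem c⟩ : Adj F E)) hu
    rwa [rop_smul_def, MulOpposite.unop_op, hc] at this

@[simp] lemma mem_ofR {W : Submodule (Rop F E) (Fin n → F)} {u : Fin n → F} :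
    u ∈ ofR W ↔ u ∈ W := Iff.rfl

lemma ofR_invariant (W : Submodule (Rop F E) (Fin n → F)) :
    MatSpaceInvariant F (graphSpace F E) (ofR W) := by
  intro B hB u hu
  have hBA : B ∈ Adj F E := Algebra.subset_adjoin hB
  have := W.smul_mem (MulOpposite.op (⟨B, hBA⟩ : Adj F E)) hu
  rwa [rop_smul_def, MulOpposite.unop_op] at this

lemma toR_ofR (W : Submodule (Rop F E) (Fin n → F)) : toR (ofR W) (ofR_invariant W) = W := by
  ext u; rfl

lemma toR_le_toR {U V : Submodule F (Fin n → F)} {hU : MatSpaceInvariant F (graphSpace F E) U}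
    {hV : MatSpaceInvariant F (graphSpace F E) V} : toR U hU ≤ toR V hV ↔ U ≤ V := Iff.rfl

lemma toR_inj {U V : Submodule F (Fin n → F)} {hU : MatSpaceInvariant F (graphSpace F E) U}
    {hV : MatSpaceInvariant F (graphSpace F E) V} (h : toR U hU = toR V hV) : U = V := by
  ext u
  exact ⟨fun hu => (h ▸ (mem_toR.mpr hu) : u ∈ toR V hV), fun hu => (h ▸ (mem_toR.mpr hu) : u ∈ toR U hU)⟩

lemma toR_lt_toR {U V : Submodule F (Fin n → F)} {hU : MatSpaceInvariant F (graphSpace F E) U}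
    {hV : MatSpaceInvariant F (graphSpace F E) V} (h : U < V) : toR U hU < toR V hV :=
  lt_of_le_of_ne (toR_le_toR.mpr h.le) (fun he => h.ne (toR_inj he))

/-- Maximality transfer: `toR U ⋖ toR V` when no invariant subspace lies strictly between. -/
lemma toR_covby {U V : Submodule F (Fin n → F)} {hU : MatSpaceInvariant F (graphSpace F E) U}
    {hV : MatSpaceInvariant F (graphSpace F E) V} (hlt : U < V)
    (hmax : ∀ W : Submodule F (Fin n → F), MatSpaceInvariant F (graphSpace F E) W →
      U ≤ W → W ≤ V → W = U ∨ W = V) :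
    toR U hU ⋖ toR V hV := by
  refine ⟨toR_lt_toR hlt, fun W hUW hWV => ?_⟩
  have h1 : U ≤ ofR W := fun u hu => hUW.le (mem_toR.mpr hu)
  have h2 : ofR W ≤ V := fun u hu => hWV.le hu
  rcases hmax (ofR W) (ofR_invariant W) h1 h2 with h | h
  · have hW : W = toR U hU := by
      ext u
      rw [mem_toR, ← h, mem_ofR]
    exact lt_irrefl _ (hW ▸ hUW)
  · have hW : W = toR V hV := by
      ext u
      rw [mem_toR, ← h, mem_ofR]
    exact lt_irrefl _ (hW ▸ hWV)

end Stmt12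

namespace Stmt12

variable (F : Type*) [Field F] {n : ℕ}

/-- Type synonym for vertices, carrying the reachability preorder (flipped). -/
structure Vtx (n : ℕ) (E : Finset (Fin n × Fin n)) where
  toFin : Fin n

variable (E : Finset (Fin n × Fin n))

instance : Preorder (Vtx n E) where
  le i j := Reach E j.toFin i.toFin
  le_refl i := reach_refl _
  le_trans a b c hab hbc := reach_trans hbc hab

def vtxEquiv : Fin n ≃ Vtx n E :=
  ⟨Vtx.mk, Vtx.toFin, fun _ => rfl, fun _ => rfl⟩

instance : Finite (Vtx n E) := Finite.of_equiv _ (vtxEquiv E)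

/-- The type of strongly connected components. -/
abbrev Qc := Antisymmetrization (Vtx n E) (· ≤ ·)

instance : Finite (Qc E) := Quotient.finite _

instance : Finite (LinearExtension (Qc E)) := inferInstanceAs (Finite (Qc E))

noncomputable instance : Fintype (LinearExtension (Qc E)) := Fintype.ofFinite _

/-- The number of strongly connected components. -/
noncomputable def cnum : ℕ := Nat.card (Qc E)

lemma card_lin : Fintype.card (LinearExtension (Qc E)) = cnum E := by
  rw [← Nat.card_eq_fintype_card]
  exact Nat.card_congr ((Equiv.refl (Qc E) : Qc E ≃ LinearExtension (Qc E))).symm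

/-- Position of a component in a topological (linear) order. -/
noncomputable def posL : Qc E → Fin (cnum E) :=
  fun q => (monoEquivOfFin (LinearExtension (Qc E)) (card_lin E)).symm (toLinearExtension q)

lemma posL_bijective : Function.Bijective (posL E) := by
  have h1 : Function.Bijective (toLinearExtension : Qc E → LinearExtension (Qc E)) :=
    Function.bijective_id
  exact ((monoEquivOfFin (LinearExtension (Qc E)) (card_lin E)).symm.bijective).comp h1

lemma posL_mono {q q' : Qc E} (h : q ≤ q') : posL E q ≤ posL E q' :=
  ((monoEquivOfFin (LinearExtension (Qc E)) (card_lin E)).symm).monotone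
    (toLinearExtension.monotone h)

/-- The component of a vertex. -/
def cls (i : Fin n) : Qc E := toAntisymmetrization (· ≤ ·) (vtxEquiv E i)

lemma cls_surjective : Function.Surjective (cls E) := fun q => by
  obtain ⟨v, hv⟩ := Quotient.exists_rep q
  exact ⟨v.toFin, hv⟩

lemma cls_le_of_reach {i j : Fin n} (h : Reach E i j) : cls E j ≤ cls E i :=
  toAntisymmetrization_mono (show (vtxEquiv E j) ≤ (vtxEquiv E i) from h)

lemma reach_of_cls_eq {i j : Fin n} (h : cls E i = cls E j) : Reach E i j ∧ Reach E j i := by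
  have := Quotient.exact h
  exact ⟨this.2, this.1⟩

end Stmt12

namespace Stmt12

variable (F : Type*) [Field F] {n : ℕ} (E : Finset (Fin n × Fin n))

/-- Vertices whose component position is `< t`. -/
def sset (t : ℕ) : Set (Fin n) := {i | (posL E (cls E i) : ℕ) < t}

lemma sset_closed (t : ℕ) : ∀ i j : Fin n, (i, j) ∈ E → i ∈ sset E t → j ∈ sset E t := by
  intro i j hij hi
  have h1 : posL E (cls E j) ≤ posL E (cls E i) :=
    posL_mono E (cls_le_of_reach E (reach_of_edge hij))
  exact lt_of_le_of_lt (Fin.le_iff_val_le_val.mp h1) hi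

/-- The coordinate subspace of the first `t` components. -/
noncomputable def Vsub (t : ℕ) : Submodule F (Fin n → F) := coordSub F (sset E t)

lemma Vsub_invariant (t : ℕ) : MatSpaceInvariant F (graphSpace F E) (Vsub F E t) :=
  coordSub_invariant (sset_closed E t)

lemma Vsub_zero : Vsub F E 0 = ⊥ := by
  ext u
  simp only [Vsub, mem_coordSub, Submodule.mem_bot]
  constructor
  · intro h; ext i; exact h i (by simp [sset])
  · rintro rfl; intro i _; rfl

lemma Vsub_top : Vsub F E (cnum E) = ⊤ := by
  ext u
  simp only [Vsub, mem_coordSub, Submodule.mem_top, iff_true]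
  intro i hi
  exact absurd (posL E (cls E i)).isLt hi

/-- Lemma A: the quotient between consecutive coordinate subspaces is simple. -/
lemma between_Vsub (t : ℕ) (W : Submodule F (Fin n → F))
    (hW : MatSpaceInvariant F (graphSpace F E) W)
    (h1 : Vsub F E t ≤ W) (h2 : W ≤ Vsub F E (t + 1)) :
    W = Vsub F E t ∨ W = Vsub F E (t + 1) := by
  classical
  by_cases hne : W = Vsub F E t
  · exact Or.inl hne
  right
  have hlt : Vsub F E t < W := lt_of_le_of_ne h1 (Ne.symm hne)
  obtain ⟨w, hwW, hwns⟩ := SetLike.exists_of_lt hlt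
  rw [Vsub, mem_coordSub] at hwns
  push_neg at hwns
  obtain ⟨i, hins, hwi⟩ := hwns
  have hit : (posL E (cls E i) : ℕ) = t := by
    have his' : i ∈ sset E (t + 1) := by
      by_contra h
      exact hwi ((h2 hwW) i h)
    simp only [sset, Set.mem_setOf_eq] at his' hins
    omega
  -- single j 1 ∈ W for every j in the same component position t, j ≠ i
  have hsingle_ne : ∀ j : Fin n, (posL E (cls E j) : ℕ) = t → j ≠ i →
      (Pi.single j 1 : Fin n → F) ∈ W := by
    intro j hjt hji
    have hcls : cls E i = cls E j :=
      (posL_bijective E).injective (Fin.ext (by omega))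
    exact single_mem_of_reach W hW (Ne.symm hji) (reach_of_cls_eq E hcls).1 hwW hwi
  -- single i 1 ∈ W via subtraction
  have hsingle_i : (Pi.single i 1 : Fin n → F) ∈ W := by
    set Cne : Finset (Fin n) :=
      Finset.univ.filter (fun j => (posL E (cls E j) : ℕ) = t ∧ j ≠ i) with hCne
    have hw' : w - ∑ j ∈ Cne, w j • (Pi.single j 1 : Fin n → F) ∈ W := by
      refine W.sub_mem hwW (Submodule.sum_mem _ fun j hj => ?_)
      rw [hCne, Finset.mem_filter] at hj
      exact W.smul_mem _ (hsingle_ne j hj.2.1 hj.2.2)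
    set w' := w - ∑ j ∈ Cne, w j • (Pi.single j 1 : Fin n → F) with hw'def
    have hw'i : w' i = w i := by
      rw [hw'def]
      simp only [Pi.sub_apply, Finset.sum_apply, Pi.smul_apply, smul_eq_mul]
      rw [Finset.sum_eq_zero, sub_zero]
      intro j hj
      rw [hCne, Finset.mem_filter] at hj
      rw [Pi.single_eq_of_ne (Ne.symm hj.2.2), mul_zero]
    have hu0 : w' - w i • (Pi.single i 1 : Fin n → F) ∈ Vsub F E t := by
      rw [Vsub, mem_coordSub]
      intro m hm
      simp only [Pi.sub_apply, Pi.smul_apply, smul_eq_mul]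
      by_cases hmi : m = i
      · subst hmi
        rw [hw'i, Pi.single_eq_same, mul_one, sub_self]
      · rw [Pi.single_eq_of_ne hmi, mul_zero, sub_zero, hw'def]
        simp only [Pi.sub_apply, Finset.sum_apply, Pi.smul_apply, smul_eq_mul]
        by_cases hmt : (posL E (cls E m) : ℕ) = t
        · rw [Finset.sum_eq_single m]
          · rw [Pi.single_eq_same, mul_one, sub_self]
          · intro j hj hjm
            rw [Pi.single_eq_of_ne (Ne.symm hjm), mul_zero]
          · intro habs
            exact absurd (by rw [hCne]; simp [hmt, hmi]) habs
        · have hm' : m ∉ sset E (t + 1) := by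
            simp only [sset, Set.mem_setOf_eq] at hm ⊢
            omega
          have hwm : w m = 0 := (h2 hwW) m hm'
          rw [hwm, Finset.sum_eq_zero, sub_zero]
          intro j hj
          rw [hCne, Finset.mem_filter] at hj
          have : j ≠ m := fun h => hmt (h ▸ hj.2.1)
          rw [Pi.single_eq_of_ne (Ne.symm this), mul_zero]
    have hfin : w i • (Pi.single i 1 : Fin n → F) ∈ W := by
      have := W.sub_mem hw' (h1 hu0)
      simpa using this
    have := W.smul_mem (w i)⁻¹ hfin
    rwa [smul_smul, inv_mul_cancel₀ hwi, one_smul] at this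
  -- conclude
  refine le_antisymm h2 ?_
  refine coordSub_le_of_single_mem fun j hj => ?_
  simp only [sset, Set.mem_setOf_eq] at hj
  by_cases hjt : (posL E (cls E j) : ℕ) < t
  · exact h1 (single_mem_coordSub hjt 1)
  · have hjt' : (posL E (cls E j) : ℕ) = t := by omega
    by_cases hji : j = i
    · exact hji ▸ hsingle_i
    · exact hsingle_ne j hjt' hji

lemma Vsub_lt (t : ℕ) (ht : t < cnum E) : Vsub F E t < Vsub F E (t + 1) := by
  obtain ⟨q, hq⟩ := (posL_bijective E).surjective ⟨t, ht⟩
  obtain ⟨i₀, hi₀⟩ := cls_surjective E q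
  have hpos : (posL E (cls E i₀) : ℕ) = t := by rw [hi₀, hq]
  rw [SetLike.lt_iff_le_and_exists]
  refine ⟨coordSub_mono fun m hm => Nat.lt_succ_of_lt hm, Pi.single i₀ 1, ?_, ?_⟩
  · exact single_mem_coordSub (by simp only [sset, Set.mem_setOf_eq]; omega) 1
  · intro hmem
    rw [Vsub, mem_coordSub] at hmem
    have := hmem i₀ (by simp only [sset, Set.mem_setOf_eq]; omega)
    rw [Pi.single_eq_same] at this
    exact one_ne_zero this

end Stmt12

namespace Stmt12

variable {F : Type*} [Field F] {n : ℕ} {E : Finset (Fin n × Fin n)}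

lemma toR_eq_bot {U : Submodule F (Fin n → F)} {hU : MatSpaceInvariant F (graphSpace F E) U}
    (h : U = ⊥) : toR U hU = ⊥ := by
  ext u
  rw [mem_toR, h, Submodule.mem_bot, Submodule.mem_bot]

lemma toR_eq_top {U : Submodule F (Fin n → F)} {hU : MatSpaceInvariant F (graphSpace F E) U}
    (h : U = ⊤) : toR U hU = ⊤ := by
  ext u
  rw [mem_toR, h]
  simp

end Stmt12

open Stmt12 in
theorem stmt_12' (F : Type*) [Field F] (n : ℕ) (E : Finset (Fin n × Fin n))
    (k : ℕ) (U : Fin (k + 1) → Submodule F (Fin n → F))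
    (hmono : StrictMono U) (hbot : U 0 = ⊥) (htop : U (Fin.last k) = ⊤)
    (hinv : ∀ i, MatSpaceInvariant F (graphSpace F E) (U i))
    (hmax : ∀ (i : Fin k) (W : Submodule F (Fin n → F)),
      MatSpaceInvariant F (graphSpace F E) W → U i.castSucc ≤ W → W ≤ U i.succ →
        W = U i.castSucc ∨ W = U i.succ) :
    Nat.card (Quot fun i j : Fin n => Reach E i j ∧ Reach E j i) = k := by
  classical
  let s1 : CompositionSeries (Submodule (Rop F E) (Fin n → F)) :=
    { length := k
      toFun := fun i => toR (U i) (hinv i)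
      step := fun i => toR_covby (hmono (Fin.castSucc_lt_succ : i.castSucc < i.succ))
        (fun W hW hle1 hle2 => hmax i W hW hle1 hle2) }
  let s2 : CompositionSeries (Submodule (Rop F E) (Fin n → F)) :=
    { length := cnum E
      toFun := fun t => toR (Vsub F E (t : ℕ)) (Vsub_invariant F E (t : ℕ))
      step := fun t => by
        have hc : ((t.castSucc : Fin (cnum E + 1)) : ℕ) = (t : ℕ) := rfl
        have hs : ((t.succ : Fin (cnum E + 1)) : ℕ) = (t : ℕ) + 1 := rfl
        show toR (Vsub F E ((t.castSucc : Fin (cnum E + 1)) : ℕ)) _ ⋖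
          toR (Vsub F E ((t.succ : Fin (cnum E + 1)) : ℕ)) _
        rw [hc, hs]  -- may fail; use convert
        exact toR_covby (Vsub_lt F E (t : ℕ) t.isLt)
          (fun W hW hle1 hle2 => between_Vsub F E (t : ℕ) W hW hle1 hle2) }
  have hhead : s1.head = s2.head := by
    show toR (U 0) (hinv 0) = toR (Vsub F E ((0 : Fin (cnum E + 1)) : ℕ))
      (Vsub_invariant F E ((0 : Fin (cnum E + 1)) : ℕ))
    rw [toR_eq_bot hbot]
    exact (toR_eq_bot (Vsub_zero F E)).symm
  have hlast : s1.last = s2.last := by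
    show toR (U (Fin.last k)) (hinv _) = toR (Vsub F E ((Fin.last (cnum E)) : ℕ))
      (Vsub_invariant F E ((Fin.last (cnum E)) : ℕ))
    rw [toR_eq_top htop]
    exact (toR_eq_top (Vsub_top F E)).symm
  have hlen : s1.length = s2.length :=
    (CompositionSeries.jordan_holder s1 s2 hhead hlast).length_eq
  have hcard : Nat.card (Quot fun i j : Fin n => Reach E i j ∧ Reach E j i) = cnum E := by
    refine Nat.card_congr (Quot.congr (vtxEquiv E) ?_ : _ ≃ Qc E)
    intro a b
    exact ⟨fun h => ⟨h.2, h.1⟩, fun h => ⟨h.2, h.1⟩⟩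
  rw [hcard]
  exact hlen.symm

/-- The number of strongly connected components of `G` (classes of the mutual-reachability
relation) equals the length of any maximal chain `0 = U_0 < U_1 < ⋯ < U_k = F^n` of
invariant subspaces of `S_G`, where maximality means no invariant subspace lies strictly
between two consecutive members of the chain. -/
theorem stmt_12 (F : Type*) [Field F] (n : ℕ) (E : Finset (Fin n × Fin n))
    (k : ℕ) (U : Fin (k + 1) → Submodule F (Fin n → F))
    (hmono : StrictMono U) (hbot : U 0 = ⊥) (htop : U (Fin.last k) = ⊤)
    (hinv : ∀ i, MatSpaceInvariant F (graphSpace F E) (U i))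
    (hmax : ∀ (i : Fin k) (W : Submodule F (Fin n → F)),
      MatSpaceInvariant F (graphSpace F E) W → U i.castSucc ≤ W → W ≤ U i.succ →
        W = U i.castSucc ∨ W = U i.succ) :
    Nat.card (Quot fun i j : Fin n => Reach E i j ∧ Reach E j i) = k :=
  stmt_12' F n E k U hmono hbot htop hinv hmax
end

section
/- Let G = ([n], E) and H = ([n], F) be directed graphs with graphical matrix spaces S_G, S_H ≤ M(n, F). If there exists an invertible matrix T ∈ GL(n, F) with T S_G Tᵗ ≤ S_H, then G is isomorphic to a subgraph of H; i.e., there is a permutation σ of [n] such that (i,j) ∈ E implies (σ(i), σ(j)) ∈ F. -/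
open Matrix

/-- Evaluation of a matrix entry, as a linear map. -/
def entryMap (F : Type*) [Field F] {n : ℕ} (a b : Fin n) :
    Matrix (Fin n) (Fin n) F →ₗ[F] F where
  toFun B := B a b
  map_add' _ _ := rfl
  map_smul' _ _ := rfl

lemma entry_zero (F : Type*) [Field F] {n : ℕ} (E' : Finset (Fin n × Fin n))
    {B : Matrix (Fin n) (Fin n) F} (hB : B ∈ graphSpace F E') {a b : Fin n}
    (hab : (a, b) ∉ E') : B a b = 0 := by
  have hle : graphSpace F E' ≤ LinearMap.ker (entryMap F a b) := by
    rw [graphSpace, Submodule.span_le]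
    rintro _ ⟨⟨i, j⟩, hij, rfl⟩
    simp only [SetLike.mem_coe, LinearMap.mem_ker, entryMap, LinearMap.coe_mk, AddHom.coe_mk]
    unfold Matrix.single
    show (if i = a ∧ j = b then (1 : F) else 0) = 0
    have : ¬(i = a ∧ j = b) := by
      rintro ⟨rfl, rfl⟩; exact hab hij
    simp [this]
  exact hle hB

lemma exists_perm_ne_zero (F : Type*) [Field F] {n : ℕ} {T : Matrix (Fin n) (Fin n) F}
    (hT : T.det ≠ 0) : ∃ σ : Equiv.Perm (Fin n), ∀ i, T (σ i) i ≠ 0 := by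
  rw [Matrix.det_apply] at hT
  obtain ⟨σ, -, hσ⟩ := Finset.exists_ne_zero_of_sum_ne_zero hT
  refine ⟨σ, fun i => ?_⟩
  have hprod : ∏ k, T (σ k) k ≠ 0 := by
    intro h
    apply hσ
    rw [h, smul_zero]
  exact Finset.prod_ne_zero_iff.mp hprod i (Finset.mem_univ i)

/-- If `T S_G Tᵗ ≤ S_H` for some invertible `T`, then `G` is isomorphic to a subgraph
of `H`: some permutation `σ` of `[n]` maps every arc of `G` to an arc of `H`. -/
theorem stmt_15 (F : Type*) [Field F] (n : ℕ)
    (E E' : Finset (Fin n × Fin n)) (T : Matrix (Fin n) (Fin n) F)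
    (hT : IsUnit T)
    (hcong : ∀ B ∈ graphSpace F E, T * B * Tᵀ ∈ graphSpace F E') :
    ∃ σ : Equiv.Perm (Fin n), ∀ i j : Fin n, (i, j) ∈ E → (σ i, σ j) ∈ E' := by
  have hdet : T.det ≠ 0 := by
    have := (Matrix.isUnit_iff_isUnit_det T).mp hT
    exact this.ne_zero
  obtain ⟨σ, hσ⟩ := exists_perm_ne_zero F hdet
  refine ⟨σ, fun i j hij => ?_⟩
  by_contra hnot
  have hmem : single i j (1 : F) ∈ graphSpace F E :=
    Submodule.subset_span ⟨(i, j), hij, rfl⟩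
  have hB := hcong _ hmem
  have hz := entry_zero F E' hB hnot
  have hentry : (T * single i j (1:F) * Tᵀ) (σ i) (σ j) = T (σ i) i * T (σ j) j := by
    simp [Matrix.mul_apply, Matrix.single, Finset.sum_mul, ite_and, Matrix.transpose_apply]
  rw [hentry] at hz
  exact (mul_ne_zero (hσ i) (hσ j)) hz
end

section
/- Let G = ([n], E) and H = ([n], F) be directed graphs with graphical matrix spaces S_G, S_H ≤ M(n, F). If S_G and S_H are conjugate, i.e., there exists T ∈ GL(n, F) with T S_G T^{-1} = S_H, then G and H are isomorphic directed graphs. -/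
open Matrix Finset

section Combinatorics

variable {n : ℕ}

/-- `i'` dominates `i` in the digraph `E`. -/
def gdom (E : Finset (Fin n × Fin n)) (i i' : Fin n) : Prop :=
  ∀ j, ((i, j) ∈ E → (i', j) ∈ E) ∧ ((j, i) ∈ E → (j, i') ∈ E)

instance (E : Finset (Fin n × Fin n)) (i i' : Fin n) : Decidable (gdom E i i') :=
  inferInstanceAs (Decidable (∀ _, _ ∧ _))

/-- `i` and `i'` are twins in the digraph `E`. -/
def gtwin (E : Finset (Fin n × Fin n)) (i i' : Fin n) : Prop := gdom E i i' ∧ gdom E i' i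

instance (E : Finset (Fin n × Fin n)) (i i' : Fin n) : Decidable (gtwin E i i') :=
  inferInstanceAs (Decidable (_ ∧ _))

theorem gdom_refl (E : Finset (Fin n × Fin n)) (i : Fin n) : gdom E i i := fun _ => ⟨id, id⟩

theorem gdom_trans {E : Finset (Fin n × Fin n)} {a b c : Fin n} (h1 : gdom E a b)
    (h2 : gdom E b c) : gdom E a c :=
  fun j => ⟨fun h => (h2 j).1 ((h1 j).1 h), fun h => (h2 j).2 ((h1 j).2 h)⟩

theorem gtwin_edge {E : Finset (Fin n × Fin n)} {a a' b b' : Fin n} (ha : gtwin E a a')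
    (hb : gtwin E b b') : (a, b) ∈ E ↔ (a', b') ∈ E := by
  constructor
  · intro h
    exact (hb.1 a').2 ((ha.1 b).1 h)
  · intro h
    exact (hb.2 a).2 ((ha.2 b').1 h)

def twinSetoid (E : Finset (Fin n × Fin n)) : Setoid (Fin n) :=
  ⟨gtwin E, ⟨fun i => ⟨gdom_refl E i, gdom_refl E i⟩, fun h => ⟨h.2, h.1⟩,
    fun h1 h2 => ⟨gdom_trans h1.1 h2.1, gdom_trans h2.2 h1.2⟩⟩⟩

instance (E : Finset (Fin n × Fin n)) : DecidableEq (Quotient (twinSetoid E)) :=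
  fun a b => Quotient.recOnSubsingleton₂ a b fun x y =>
    decidable_of_iff (gtwin E x y) (by rw [Quotient.eq]; rfl)

instance (E : Finset (Fin n × Fin n)) : Fintype (Quotient (twinSetoid E)) :=
  @Quotient.fintype _ _ (twinSetoid E) (fun a b => inferInstanceAs (Decidable (gtwin E a b)))

end Combinatorics

section Pair

variable {F : Type*} [Field F] {n : ℕ}

/-- The coupling relation between vertices, induced by the pair of matrices `A`, `B`
(to be used with `B = A⁻¹`). -/
def mrel (A B : Matrix (Fin n) (Fin n) F) (i k : Fin n) : Prop := A k i ≠ 0 ∧ B i k ≠ 0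

theorem mrel_flip {A B : Matrix (Fin n) (Fin n) F} {i k : Fin n} (h : mrel A B i k) :
    mrel B A k i := ⟨h.2, h.1⟩

theorem mrel_total {A B : Matrix (Fin n) (Fin n) F} (hBA : B * A = 1) (i : Fin n) :
    ∃ k, mrel A B i k := by
  have h1 : ∑ k, B i k * A k i ≠ 0 := by
    rw [← Matrix.mul_apply, hBA]
    simp
  obtain ⟨k, _, hk⟩ := Finset.exists_ne_zero_of_sum_ne_zero h1
  exact ⟨k, right_ne_zero_of_mul hk, left_ne_zero_of_mul hk⟩

variable {E₁ E₂ : Finset (Fin n × Fin n)} {A B : Matrix (Fin n) (Fin n) F}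

theorem mrel_main
    (hA : ∀ {i j k l : Fin n}, (i, j) ∈ E₁ → A k i ≠ 0 → B j l ≠ 0 → (k, l) ∈ E₂)
    (hB : ∀ {k l i j : Fin n}, (k, l) ∈ E₂ → B i k ≠ 0 → A l j ≠ 0 → (i, j) ∈ E₁)
    {i j k l : Fin n} (hik : mrel A B i k) (hjl : mrel A B j l) :
    (i, j) ∈ E₁ ↔ (k, l) ∈ E₂ :=
  ⟨fun h => hA h hik.1 hjl.2, fun h => hB h hik.2 hjl.1⟩

theorem mrel_dom (hAB : A * B = 1)
    (hA : ∀ {i j k l : Fin n}, (i, j) ∈ E₁ → A k i ≠ 0 → B j l ≠ 0 → (k, l) ∈ E₂)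
    (hB : ∀ {k l i j : Fin n}, (k, l) ∈ E₂ → B i k ≠ 0 → A l j ≠ 0 → (i, j) ∈ E₁)
    {i k i' k' : Fin n} (hik : mrel A B i k) (hik' : mrel A B i' k')
    (h : gdom E₁ i i') : gdom E₂ k k' := by
  intro l
  constructor
  · intro hkl
    obtain ⟨j, hj0⟩ := mrel_total (A := B) (B := A) hAB l
    have hj := mrel_flip hj0
    have h1 : (i, j) ∈ E₁ := hB hkl hik.2 hj.1
    exact hA ((h j).1 h1) hik'.1 hj.2
  · intro hlk
    obtain ⟨j', hj'0⟩ := mrel_total (A := B) (B := A) hAB l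
    have hj' := mrel_flip hj'0
    have h1 : (j', i) ∈ E₁ := hB hlk hj'.2 hik.1
    exact hA ((h j').2 h1) hj'.1 hik'.2

theorem mrel_twin (hAB : A * B = 1)
    (hA : ∀ {i j k l : Fin n}, (i, j) ∈ E₁ → A k i ≠ 0 → B j l ≠ 0 → (k, l) ∈ E₂)
    (hB : ∀ {k l i j : Fin n}, (k, l) ∈ E₂ → B i k ≠ 0 → A l j ≠ 0 → (i, j) ∈ E₁)
    {i k i' k' : Fin n} (hik : mrel A B i k) (hik' : mrel A B i' k')
    (h : gtwin E₁ i i') : gtwin E₂ k k' :=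
  ⟨mrel_dom hAB hA hB hik hik' h.1, mrel_dom hAB hA hB hik' hik h.2⟩

theorem mrel_domlift (hAB : A * B = 1)
    (hA : ∀ {i j k l : Fin n}, (i, j) ∈ E₁ → A k i ≠ 0 → B j l ≠ 0 → (k, l) ∈ E₂)
    (hB : ∀ {k l i j : Fin n}, (k, l) ∈ E₂ → B i k ≠ 0 → A l j ≠ 0 → (i, j) ∈ E₁)
    {i k i' i'' k' : Fin n} (hik : mrel A B i k) (h' : gdom E₁ i i') (h'' : gdom E₁ i i'')
    (hb : B i' k' ≠ 0) (ha : A k' i'' ≠ 0) : gdom E₂ k k' := by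
  intro l
  constructor
  · intro hkl
    obtain ⟨j, hj0⟩ := mrel_total (A := B) (B := A) hAB l
    have hj := mrel_flip hj0
    have h1 : (i, j) ∈ E₁ := hB hkl hik.2 hj.1
    exact hA ((h'' j).1 h1) ha hj.2
  · intro hlk
    obtain ⟨j', hj'0⟩ := mrel_total (A := B) (B := A) hAB l
    have hj' := mrel_flip hj'0
    have h1 : (j', i) ∈ E₁ := hB hlk hj'.2 hik.1
    exact hA ((h' j').2 h1) hj'.1 hb

theorem card_domset_le (hAB : A * B = 1) (hBA : B * A = 1)
    (hA : ∀ {i j k l : Fin n}, (i, j) ∈ E₁ → A k i ≠ 0 → B j l ≠ 0 → (k, l) ∈ E₂)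
    (hB : ∀ {k l i j : Fin n}, (k, l) ∈ E₂ → B i k ≠ 0 → A l j ≠ 0 → (i, j) ∈ E₁)
    {i k : Fin n} (hik : mrel A B i k) :
    (univ.filter (gdom E₁ i)).card ≤ (univ.filter (gdom E₂ k)).card := by
  classical
  set U : Finset (Fin n) := univ.filter (gdom E₁ i) with hU
  set V : Finset (Fin n) := univ.filter (gdom E₂ k) with hV
  let P : Matrix U V F := fun x y => B x.1 y.1
  let Q : Matrix V U F := fun y x => A y.1 x.1
  have hPQ : P * Q = (1 : Matrix U U F) := by
    ext x x'
    have hzero : ∀ y ∈ (univ : Finset (Fin n)), y ∉ V → B x.1 y * A y x'.1 = 0 := by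
      intro y _ hy
      by_contra hne
      have hb := left_ne_zero_of_mul hne
      have ha := right_ne_zero_of_mul hne
      have hdom : gdom E₂ k y := mrel_domlift hAB hA hB hik
        (mem_filter.mp x.2).2 (mem_filter.mp x'.2).2 hb ha
      exact hy (by rw [hV]; exact mem_filter.mpr ⟨mem_univ _, hdom⟩)
    have hsum : (P * Q) x x' = ∑ y : Fin n, B x.1 y * A y x'.1 := by
      rw [Matrix.mul_apply]
      rw [show ∑ y : V, P x y * Q y x' = ∑ y ∈ V, B x.1 y * A y x'.1 from
        Finset.sum_coe_sort V (fun y => B x.1 y * A y x'.1)]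
      exact Finset.sum_subset (Finset.subset_univ V) hzero
    have hone : ∑ y : Fin n, B x.1 y * A y x'.1 = (1 : Matrix (Fin n) (Fin n) F) x.1 x'.1 := by
      rw [← Matrix.mul_apply, hBA]
    rw [hsum, hone, Matrix.one_apply, Matrix.one_apply]
    by_cases hxx : x = x'
    · subst hxx; rw [if_pos rfl, if_pos rfl]
    · have hxx' : ¬ x.1 = x'.1 := fun h => hxx (Subtype.ext h)
      simp only [hxx, hxx', ↓reduceIte]
  have h1 : Fintype.card U = ((1 : Matrix U U F)).rank := (Matrix.rank_one).symm
  have h2 : ((1 : Matrix U U F)).rank ≤ Q.rank := by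
    rw [← hPQ]; exact Matrix.rank_mul_le_right P Q
  have h3 : Q.rank ≤ Fintype.card V := Matrix.rank_le_card_height Q
  calc U.card = Fintype.card U := (Fintype.card_coe U).symm
    _ ≤ Fintype.card V := by omega
    _ = V.card := Fintype.card_coe V

/-- Choice of a partner for each vertex. -/
noncomputable def pfn (A B : Matrix (Fin n) (Fin n) F) (hBA : B * A = 1) : Fin n → Fin n :=
  fun i => Classical.choose (mrel_total (A := A) (B := B) hBA i)

theorem pfn_spec (A B : Matrix (Fin n) (Fin n) F) (hBA : B * A = 1) (i : Fin n) :
    mrel A B i (pfn A B hBA i) := Classical.choose_spec (mrel_total (A := A) (B := B) hBA i)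

end Pair

section Main

variable {F : Type*} [Field F] {n : ℕ}
variable {E₁ E₂ : Finset (Fin n × Fin n)} {A B : Matrix (Fin n) (Fin n) F}

theorem card_twinset_eq (hAB : A * B = 1) (hBA : B * A = 1)
    (hA : ∀ {i j k l : Fin n}, (i, j) ∈ E₁ → A k i ≠ 0 → B j l ≠ 0 → (k, l) ∈ E₂)
    (hB : ∀ {k l i j : Fin n}, (k, l) ∈ E₂ → B i k ≠ 0 → A l j ≠ 0 → (i, j) ∈ E₁) :
    ∀ (N : ℕ) (i k : Fin n), (univ.filter (gdom E₁ i)).card ≤ N → mrel A B i k →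
      (univ.filter (gtwin E₁ i)).card = (univ.filter (gtwin E₂ k)).card := by
  intro N
  induction N with
  | zero =>
    intro i k hcard _
    exfalso
    have : i ∈ univ.filter (gdom E₁ i) := mem_filter.mpr ⟨mem_univ _, gdom_refl E₁ i⟩
    have := Finset.card_pos.mpr ⟨i, this⟩
    omega
  | succ N ih =>
    intro i k hcard hik
    have hdomeq : (univ.filter (gdom E₁ i)).card = (univ.filter (gdom E₂ k)).card :=
      le_antisymm (card_domset_le hAB hBA hA hB hik)
        (card_domset_le hBA hAB hB hA (mrel_flip hik))
    -- split the domination set into twins and strict dominators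
    have hsplit₁ : (univ.filter (gtwin E₁ i)).card
        + (univ.filter (fun x => gdom E₁ i x ∧ ¬ gdom E₁ x i)).card
        = (univ.filter (gdom E₁ i)).card := by
      rw [show univ.filter (gtwin E₁ i) = (univ.filter (gdom E₁ i)).filter (fun x => gdom E₁ x i)
          from by rw [Finset.filter_filter]; rfl]
      rw [show univ.filter (fun x => gdom E₁ i x ∧ ¬ gdom E₁ x i)
          = (univ.filter (gdom E₁ i)).filter (fun x => ¬ gdom E₁ x i)
          from by rw [Finset.filter_filter]]
      exact Finset.card_filter_add_card_filter_not _
    have hsplit₂ : (univ.filter (gtwin E₂ k)).card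
        + (univ.filter (fun y => gdom E₂ k y ∧ ¬ gdom E₂ y k)).card
        = (univ.filter (gdom E₂ k)).card := by
      rw [show univ.filter (gtwin E₂ k) = (univ.filter (gdom E₂ k)).filter (fun y => gdom E₂ y k)
          from by rw [Finset.filter_filter]; rfl]
      rw [show univ.filter (fun y => gdom E₂ k y ∧ ¬ gdom E₂ y k)
          = (univ.filter (gdom E₂ k)).filter (fun y => ¬ gdom E₂ y k)
          from by rw [Finset.filter_filter]]
      exact Finset.card_filter_add_card_filter_not _
    -- strict dominator sets have equal cardinality
    have hstrict : (univ.filter (fun x => gdom E₁ i x ∧ ¬ gdom E₁ x i)).card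
        = (univ.filter (fun y => gdom E₂ k y ∧ ¬ gdom E₂ y k)).card := by
      classical
      rw [Finset.card_eq_sum_card_fiberwise
        (f := fun x => Quotient.mk (twinSetoid E₁) x) (t := univ) (fun x _ => mem_univ _)]
      rw [Finset.card_eq_sum_card_fiberwise
        (f := fun y => Quotient.mk (twinSetoid E₂) y) (t := univ) (fun y _ => mem_univ _)]
      -- the quotient map
      refine Fintype.sum_equiv
        ⟨Quotient.lift (fun x => Quotient.mk (twinSetoid E₂) (pfn A B hBA x))
            (fun a b hab => Quotient.sound
              (mrel_twin hAB hA hB (pfn_spec A B hBA a) (pfn_spec A B hBA b) hab)),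
         Quotient.lift (fun y => Quotient.mk (twinSetoid E₁) (pfn B A hAB y))
            (fun a b hab => Quotient.sound
              (mrel_twin hBA hB hA (pfn_spec B A hAB a) (pfn_spec B A hAB b) hab)),
         ?_, ?_⟩ _ _ ?_
      · intro q
        induction q using Quotient.inductionOn with
        | h x =>
          refine Quotient.sound ?_
          exact mrel_twin hBA hB hA
            (pfn_spec B A hAB (pfn A B hBA x)) (mrel_flip (pfn_spec A B hBA x))
            ⟨gdom_refl _ _, gdom_refl _ _⟩
      · intro q
        induction q using Quotient.inductionOn with
        | h y =>
          refine Quotient.sound ?_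
          exact mrel_twin hAB hA hB
            (pfn_spec A B hBA (pfn B A hAB y)) (mrel_flip (pfn_spec B A hAB y))
            ⟨gdom_refl _ _, gdom_refl _ _⟩
      · intro q
        induction q using Quotient.inductionOn with
        | h x =>
          simp only [Equiv.coe_fn_mk, Quotient.lift_mk]
          set k'' := pfn A B hBA x with hk''
          have hxk'' : mrel A B x k'' := pfn_spec A B hBA x
          by_cases hs : gdom E₁ i x ∧ ¬ gdom E₁ x i
          · have hks : gdom E₂ k k'' ∧ ¬ gdom E₂ k'' k := by
              constructor
              · exact mrel_dom hAB hA hB hik hxk'' hs.1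
              · intro hc
                exact hs.2 (mrel_dom hBA hB hA (mrel_flip hxk'') (mrel_flip hik) hc)
            have e₁ : (univ.filter (fun a => gdom E₁ i a ∧ ¬ gdom E₁ a i)).filter
                (fun a => Quotient.mk (twinSetoid E₁) a = Quotient.mk (twinSetoid E₁) x)
                = univ.filter (gtwin E₁ x) := by
              ext a
              simp only [mem_filter, mem_univ, true_and]
              constructor
              · rintro ⟨-, hq⟩
                exact (twinSetoid E₁).symm (Quotient.exact hq)
              · intro ht
                refine ⟨⟨gdom_trans hs.1 ht.1, fun hc => hs.2 (gdom_trans ht.1 hc)⟩, ?_⟩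
                exact Quotient.sound ((twinSetoid E₁).symm ht)
            have e₂ : (univ.filter (fun b => gdom E₂ k b ∧ ¬ gdom E₂ b k)).filter
                (fun b => Quotient.mk (twinSetoid E₂) b = Quotient.mk (twinSetoid E₂) k'')
                = univ.filter (gtwin E₂ k'') := by
              ext b
              simp only [mem_filter, mem_univ, true_and]
              constructor
              · rintro ⟨-, hq⟩
                exact (twinSetoid E₂).symm (Quotient.exact hq)
              · intro ht
                refine ⟨⟨gdom_trans hks.1 ht.1, fun hc => hks.2 (gdom_trans ht.1 hc)⟩, ?_⟩
                exact Quotient.sound ((twinSetoid E₂).symm ht)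
            rw [e₁]; erw [e₂]
            -- apply the induction hypothesis
            have hsub : univ.filter (gdom E₁ x) ⊂ univ.filter (gdom E₁ i) := by
              constructor
              · intro a ha
                exact mem_filter.mpr ⟨mem_univ _, gdom_trans hs.1 (mem_filter.mp ha).2⟩
              · intro hc
                have : i ∈ univ.filter (gdom E₁ x) :=
                  hc (mem_filter.mpr ⟨mem_univ _, gdom_refl E₁ i⟩)
                exact hs.2 (mem_filter.mp this).2
            have hlt := Finset.card_lt_card hsub
            exact ih x k'' (by omega) hxk''
          · have e₁ : (univ.filter (fun a => gdom E₁ i a ∧ ¬ gdom E₁ a i)).filter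
                (fun a => Quotient.mk (twinSetoid E₁) a = Quotient.mk (twinSetoid E₁) x)
                = ∅ := by
              rw [Finset.eq_empty_iff_forall_notMem]
              intro a ha
              obtain ⟨ha1, ha2⟩ := mem_filter.mp ha
              have hs' := (mem_filter.mp ha1).2
              have htw : gtwin E₁ a x := Quotient.exact ha2
              exact hs ⟨gdom_trans hs'.1 htw.1, fun hc => hs'.2 (gdom_trans htw.1 hc)⟩
            have e₂ : (univ.filter (fun b => gdom E₂ k b ∧ ¬ gdom E₂ b k)).filter
                (fun b => Quotient.mk (twinSetoid E₂) b = Quotient.mk (twinSetoid E₂) k'')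
                = ∅ := by
              rw [Finset.eq_empty_iff_forall_notMem]
              intro b hb
              obtain ⟨hb1, hb2⟩ := mem_filter.mp hb
              have hs' := (mem_filter.mp hb1).2
              have htw : gtwin E₂ b k'' := Quotient.exact hb2
              have hks : gdom E₂ k k'' ∧ ¬ gdom E₂ k'' k :=
                ⟨gdom_trans hs'.1 htw.1, fun hc => hs'.2 (gdom_trans htw.1 hc)⟩
              refine hs ⟨?_, ?_⟩
              · exact mrel_dom hBA hB hA (mrel_flip hik) (mrel_flip hxk'') hks.1
              · intro hc
                exact hks.2 (mrel_dom hAB hA hB hxk'' hik hc)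
            rw [e₁]; erw [e₂]
    omega

theorem master_perm (hAB : A * B = 1) (hBA : B * A = 1)
    (hA : ∀ {i j k l : Fin n}, (i, j) ∈ E₁ → A k i ≠ 0 → B j l ≠ 0 → (k, l) ∈ E₂)
    (hB : ∀ {k l i j : Fin n}, (k, l) ∈ E₂ → B i k ≠ 0 → A l j ≠ 0 → (i, j) ∈ E₁) :
    ∃ σ : Equiv.Perm (Fin n), ∀ i j : Fin n, (i, j) ∈ E₁ ↔ (σ i, σ j) ∈ E₂ := by
  classical
  -- the bijection on twin classes
  let θ : Quotient (twinSetoid E₁) ≃ Quotient (twinSetoid E₂) :=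
    ⟨Quotient.lift (fun x => Quotient.mk (twinSetoid E₂) (pfn A B hBA x))
        (fun a b hab => Quotient.sound
          (mrel_twin hAB hA hB (pfn_spec A B hBA a) (pfn_spec A B hBA b) hab)),
     Quotient.lift (fun y => Quotient.mk (twinSetoid E₁) (pfn B A hAB y))
        (fun a b hab => Quotient.sound
          (mrel_twin hBA hB hA (pfn_spec B A hAB a) (pfn_spec B A hAB b) hab)),
     fun q => Quotient.inductionOn q (fun x => Quotient.sound
        (mrel_twin hBA hB hA (pfn_spec B A hAB (pfn A B hBA x))
          (mrel_flip (pfn_spec A B hBA x)) ⟨gdom_refl _ _, gdom_refl _ _⟩)),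
     fun q => Quotient.inductionOn q (fun y => Quotient.sound
        (mrel_twin hAB hA hB (pfn_spec A B hBA (pfn B A hAB y))
          (mrel_flip (pfn_spec B A hAB y)) ⟨gdom_refl _ _, gdom_refl _ _⟩))⟩
  -- fiberwise equivalences
  have hfib : ∀ q : Quotient (twinSetoid E₁),
      Fintype.card {x // Quotient.mk (twinSetoid E₁) x = q}
        = Fintype.card {y // Quotient.mk (twinSetoid E₂) y = θ q} := by
    intro q
    induction q using Quotient.inductionOn with
    | h x =>
      have hθ : θ (Quotient.mk (twinSetoid E₁) x) = Quotient.mk (twinSetoid E₂) (pfn A B hBA x) :=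
        rfl
      rw [hθ]
      rw [Fintype.card_subtype, Fintype.card_subtype]
      rw [show univ.filter (fun a => Quotient.mk (twinSetoid E₁) a = Quotient.mk (twinSetoid E₁) x)
          = univ.filter (gtwin E₁ x) from by
        ext a
        simp only [mem_filter, mem_univ, true_and]
        exact ⟨fun h => (twinSetoid E₁).symm (Quotient.exact h),
          fun h => Quotient.sound ((twinSetoid E₁).symm h)⟩]
      rw [show univ.filter (fun b => Quotient.mk (twinSetoid E₂) b
            = Quotient.mk (twinSetoid E₂) (pfn A B hBA x))
          = univ.filter (gtwin E₂ (pfn A B hBA x)) from by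
        ext b
        simp only [mem_filter, mem_univ, true_and]
        exact ⟨fun h => (twinSetoid E₂).symm (Quotient.exact h),
          fun h => Quotient.sound ((twinSetoid E₂).symm h)⟩]
      exact card_twinset_eq hAB hBA hA hB (univ.filter (gdom E₁ x)).card x (pfn A B hBA x)
        le_rfl (pfn_spec A B hBA x)
  let fib : ∀ q : Quotient (twinSetoid E₁),
      {x // Quotient.mk (twinSetoid E₁) x = q} ≃ {y // Quotient.mk (twinSetoid E₂) y = θ q} :=
    fun q => Fintype.equivOfCardEq (hfib q)
  let σ : Equiv.Perm (Fin n) :=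
    ((Equiv.sigmaFiberEquiv (fun x => Quotient.mk (twinSetoid E₁) x)).symm).trans
      ((Equiv.sigmaCongr θ fib).trans
        (Equiv.sigmaFiberEquiv (fun y => Quotient.mk (twinSetoid E₂) y)))
  have hσ : ∀ x : Fin n, Quotient.mk (twinSetoid E₂) (σ x)
      = Quotient.mk (twinSetoid E₂) (pfn A B hBA x) := by
    intro x
    have : Quotient.mk (twinSetoid E₂) (σ x) = θ (Quotient.mk (twinSetoid E₁) x) :=
      (fib (Quotient.mk (twinSetoid E₁) x) ⟨x, rfl⟩).2
    rw [this]
    rfl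
  refine ⟨σ, fun i j => ?_⟩
  have h1 : gtwin E₂ (pfn A B hBA i) (σ i) := (twinSetoid E₂).symm (Quotient.exact (hσ i))
  have h2 : gtwin E₂ (pfn A B hBA j) (σ j) := (twinSetoid E₂).symm (Quotient.exact (hσ j))
  rw [mrel_main hA hB (pfn_spec A B hBA i) (pfn_spec A B hBA j)]
  exact gtwin_edge h1 h2

end Main

section Entries

variable {F : Type*} [Field F] {n : ℕ}

theorem graphSpace_apply_eq_zero_s16 {E : Finset (Fin n × Fin n)}
    {X : Matrix (Fin n) (Fin n) F} (hX : X ∈ graphSpace F E) {k l : Fin n}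
    (h : (k, l) ∉ E) : X k l = 0 := by
  induction hX using Submodule.span_induction with
  | mem x hx =>
    obtain ⟨e, he, rfl⟩ := hx
    have hne : ¬(e.1 = k ∧ e.2 = l) := by
      rintro ⟨h1, h2⟩
      apply h
      have : e = (k, l) := Prod.ext h1 h2
      rw [← this]
      exact Finset.mem_coe.mp he
    simp only [Matrix.single, Matrix.of_apply, if_neg hne]
  | zero => rfl
  | add x y _ _ hx hy => simp [Matrix.add_apply, hx, hy]
  | smul a x _ hx => simp [Matrix.smul_apply, hx]

theorem sandwich_apply (T S : Matrix (Fin n) (Fin n) F) (i j k l : Fin n) :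
    (T * Matrix.single i j (1 : F) * S) k l = T k i * S j l := by
  rw [Matrix.mul_assoc, Matrix.mul_apply]
  rw [Finset.sum_eq_single i]
  · rw [Matrix.single_mul_apply_same]; ring
  · intro a _ hne
    rw [Matrix.single_mul_apply_of_ne (1 : F) i j a l hne]
    ring
  · simp

end Entries

/-- If `S_G` and `S_H` are conjugate — i.e. `T S_G T⁻¹ = S_H` for some invertible `T` —
then the directed graphs `G` and `H` are isomorphic. -/
theorem stmt_16 (F : Type*) [Field F] (n : ℕ)
    (E E' : Finset (Fin n × Fin n)) (T : Matrix (Fin n) (Fin n) F)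
    (hT : IsUnit T)
    (hconj : ∀ B : Matrix (Fin n) (Fin n) F,
      B ∈ graphSpace F E ↔ T * B * T⁻¹ ∈ graphSpace F E') :
    ∃ σ : Equiv.Perm (Fin n), ∀ i j : Fin n, (i, j) ∈ E ↔ (σ i, σ j) ∈ E' := by
  have hdet : IsUnit T.det := (Matrix.isUnit_iff_isUnit_det T).mp hT
  have hAB : T * T⁻¹ = 1 := Matrix.mul_nonsing_inv T hdet
  have hBA : T⁻¹ * T = 1 := Matrix.nonsing_inv_mul T hdet
  have hA : ∀ {i j k l : Fin n}, (i, j) ∈ E → T k i ≠ 0 → T⁻¹ j l ≠ 0 → (k, l) ∈ E' := by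
    intro i j k l hij h1 h2
    by_contra hkl
    have hmem : Matrix.single i j (1 : F) ∈ graphSpace F E :=
      Submodule.subset_span ⟨(i, j), Finset.mem_coe.mpr hij, rfl⟩
    have h0 := graphSpace_apply_eq_zero_s16 ((hconj _).mp hmem) hkl
    rw [sandwich_apply T T⁻¹ i j k l] at h0
    exact mul_ne_zero h1 h2 h0
  have hB : ∀ {k l i j : Fin n}, (k, l) ∈ E' → T⁻¹ i k ≠ 0 → T l j ≠ 0 → (i, j) ∈ E := by
    intro k l i j hkl h1 h2
    by_contra hij
    have hmem' : Matrix.single k l (1 : F) ∈ graphSpace F E' :=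
      Submodule.subset_span ⟨(k, l), Finset.mem_coe.mpr hkl, rfl⟩
    have hre : T * (T⁻¹ * Matrix.single k l (1 : F) * T) * T⁻¹
        = Matrix.single k l (1 : F) := by
      have : T * (T⁻¹ * Matrix.single k l (1 : F) * T) * T⁻¹
          = (T * T⁻¹) * Matrix.single k l (1 : F) * (T * T⁻¹) := by
        noncomm_ring
      rw [this, hAB, Matrix.one_mul, Matrix.mul_one]
    have hmm : T⁻¹ * Matrix.single k l (1 : F) * T ∈ graphSpace F E :=
      (hconj _).mpr (by rw [hre]; exact hmem')
    have h0 := graphSpace_apply_eq_zero_s16 hmm hij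
    rw [sandwich_apply T⁻¹ T k l i j] at h0
    exact mul_ne_zero h1 h2 h0
  exact master_perm hAB hBA hA hB
end

section
/- Let F be a field with |F| > 2 and let G = ([n], E) be a vertex-transitive directed graph. Then the subgroup of GL(n, F) generated by the permutation matrices of automorphisms of G together with all invertible diagonal matrices is an irreducible matrix group; consequently the graphical matrix space S_G is both conjugacy irreducible and congruence irreducible. -/
open Matrix

/-- `σ` is an automorphism of the directed graph with arc set `E`. -/
def IsGraphAut {n : ℕ} (E : Finset (Fin n × Fin n)) (σ : Equiv.Perm (Fin n)) : Prop :=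
  ∀ i j : Fin n, (i, j) ∈ E ↔ (σ i, σ j) ∈ E

/-- A set of invertible matrices is irreducible if the only subspaces of `F^n`
(row vectors, acted on from the right) invariant under all its elements are `0` and
`F^n`. -/
def IrreducibleMatSet {n : ℕ} {F : Type*} [Field F]
    (G : Set (Matrix (Fin n) (Fin n) F)ˣ) : Prop :=
  ∀ U : Submodule F (Fin n → F),
    (∀ A ∈ G, ∀ u ∈ U, Matrix.vecMul u (A : Matrix (Fin n) (Fin n) F) ∈ U) →
      U = ⊥ ∨ U = ⊤

section Aux

variable {F : Type*} [Field F] {n : ℕ} (E : Finset (Fin n × Fin n))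

lemma irrMono {S T : Set (Matrix (Fin n) (Fin n) F)ˣ} (h : S ⊆ T)
    (hS : IrreducibleMatSet S) : IrreducibleMatSet T :=
  fun U hU => hS U (fun A hA => hU A (h hA))

/-- the unit of a permutation matrix -/
def permUnit (σ : Equiv.Perm (Fin n)) : (Matrix (Fin n) (Fin n) F)ˣ where
  val := σ.permMatrix F
  inv := (σ⁻¹).permMatrix F
  val_inv := by
    rw [← PEquiv.toMatrix_trans, ← Equiv.toPEquiv_trans]
    simp [Equiv.Perm.inv_def]
  inv_val := by
    rw [← PEquiv.toMatrix_trans, ← Equiv.toPEquiv_trans]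
    simp [Equiv.Perm.inv_def]

/-- the unit of an invertible diagonal matrix -/
def diagUnit (d : Fin n → Fˣ) : (Matrix (Fin n) (Fin n) F)ˣ where
  val := Matrix.diagonal (fun i => (d i : F))
  inv := Matrix.diagonal (fun i => ((d i)⁻¹ : Fˣ))
  val_inv := by rw [diagonal_mul_diagonal]; simp [← Units.val_mul]
  inv_val := by rw [diagonal_mul_diagonal]; simp [← Units.val_mul]

lemma aut_inv {σ : Equiv.Perm (Fin n)} (h : IsGraphAut E σ) : IsGraphAut E σ⁻¹ := by
  intro i j
  rw [h (σ⁻¹ i) (σ⁻¹ j)]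
  simp

lemma conj_stable (A C : Matrix (Fin n) (Fin n) F)
    (h : ∀ i j : Fin n, (i, j) ∈ E →
      A * Matrix.single i j (1 : F) * C ∈ graphSpace F E) :
    ∀ B ∈ graphSpace F E, A * B * C ∈ graphSpace F E := by
  intro B hB
  induction hB using Submodule.span_induction with
  | mem x hx => obtain ⟨⟨i, j⟩, hij, rfl⟩ := hx; exact h i j hij
  | zero => simp [graphSpace]
  | add x y hx hy ihx ihy => rw [mul_add, add_mul]; exact add_mem ihx ihy
  | smul a x hx ihx => rw [Matrix.mul_smul, Matrix.smul_mul]; exact Submodule.smul_mem _ _ ihx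

lemma perm_conj_std (σ : Equiv.Perm (Fin n)) (i j : Fin n) :
    σ.permMatrix F * Matrix.single i j (1 : F) * (σ⁻¹).permMatrix F =
      Matrix.single (σ⁻¹ i) (σ⁻¹ j) (1 : F) := by
  rw [PEquiv.toMatrix_toPEquiv_mul, PEquiv.mul_toMatrix_toPEquiv]
  ext a b
  simp only [submatrix_apply, id_eq, Matrix.single, of_apply]
  rw [show (σ⁻¹).symm = σ from rfl]
  congr 1
  simp only [eq_iff_iff]
  constructor
  · rintro ⟨rfl, rfl⟩; simp
  · rintro ⟨rfl, rfl⟩; simp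

lemma perm_forward {σ : Equiv.Perm (Fin n)} (hσ : IsGraphAut E σ) :
    ∀ B ∈ graphSpace F E, σ.permMatrix F * B * (σ⁻¹).permMatrix F ∈ graphSpace F E := by
  apply conj_stable
  intro i j hij
  rw [perm_conj_std]
  apply Submodule.subset_span
  refine ⟨(σ⁻¹ i, σ⁻¹ j), ?_, rfl⟩
  have := (hσ (σ⁻¹ i) (σ⁻¹ j)).symm
  simpa using this.mp (by simpa using hij)

lemma diag_conj_std (d e : Fin n → F) (i j : Fin n) :
    Matrix.diagonal d * Matrix.single i j (1 : F) * Matrix.diagonal e =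
      (d i * e j) • Matrix.single i j (1 : F) := by
  ext a b
  rw [Matrix.mul_diagonal, Matrix.diagonal_mul]
  simp only [Matrix.single, of_apply, Matrix.smul_apply, smul_eq_mul]
  split_ifs with h
  · obtain ⟨rfl, rfl⟩ := h; ring
  · ring

lemma diag_forward (d e : Fin n → F) :
    ∀ B ∈ graphSpace F E, Matrix.diagonal d * B * Matrix.diagonal e ∈ graphSpace F E := by
  apply conj_stable
  intro i j hij
  rw [diag_conj_std]
  exact Submodule.smul_mem _ _ (Submodule.subset_span ⟨(i, j), hij, rfl⟩)

lemma cancel1 {M : Type*} [Monoid M] (T : Mˣ) (B : M) :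
    (↑T⁻¹ : M) * ((↑T : M) * B * (↑T⁻¹ : M)) * (↑T : M) = B := by
  simp [mul_assoc]

lemma cancel2 {M : Type*} [Monoid M] (T : Mˣ) (B : M) :
    (↑T⁻¹ : M) * ((↑T : M) * B * (↑T : M)) * (↑T⁻¹ : M) = B := by
  simp [mul_assoc]

lemma permUnit_coe (σ : Equiv.Perm (Fin n)) :
    ((permUnit σ : (Matrix (Fin n) (Fin n) F)ˣ) : Matrix (Fin n) (Fin n) F) =
      σ.permMatrix F := rfl

lemma permUnit_inv_coe (σ : Equiv.Perm (Fin n)) :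
    (((permUnit σ)⁻¹ : (Matrix (Fin n) (Fin n) F)ˣ) : Matrix (Fin n) (Fin n) F) =
      (σ⁻¹).permMatrix F := rfl

lemma diagUnit_coe (d : Fin n → Fˣ) :
    ((diagUnit d : (Matrix (Fin n) (Fin n) F)ˣ) : Matrix (Fin n) (Fin n) F) =
      Matrix.diagonal (fun i => (d i : F)) := rfl

lemma diagUnit_inv_coe (d : Fin n → Fˣ) :
    (((diagUnit d)⁻¹ : (Matrix (Fin n) (Fin n) F)ˣ) : Matrix (Fin n) (Fin n) F) =
      Matrix.diagonal (fun i => (((d i)⁻¹ : Fˣ) : F)) := rfl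

lemma permUnit_transpose (σ : Equiv.Perm (Fin n)) :
    ((permUnit σ : (Matrix (Fin n) (Fin n) F)ˣ) : Matrix (Fin n) (Fin n) F)ᵀ =
      (σ⁻¹).permMatrix F := by
  rw [permUnit_coe]
  show (σ.toPEquiv.toMatrix)ᵀ = _
  rw [← PEquiv.toMatrix_symm, ← Equiv.toPEquiv_symm]
  rfl

lemma permCancel1 (σ : Equiv.Perm (Fin n)) (B : Matrix (Fin n) (Fin n) F) :
    (σ⁻¹).permMatrix F * (σ.permMatrix F * B * (σ⁻¹).permMatrix F) * σ.permMatrix F = B := by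
  have h := cancel1 (permUnit σ : (Matrix (Fin n) (Fin n) F)ˣ) B
  rwa [permUnit_coe, permUnit_inv_coe] at h

lemma diagCancel1 (d : Fin n → Fˣ) (B : Matrix (Fin n) (Fin n) F) :
    Matrix.diagonal (fun i => (((d i)⁻¹ : Fˣ) : F)) *
      (Matrix.diagonal (fun i => (d i : F)) * B *
        Matrix.diagonal (fun i => (((d i)⁻¹ : Fˣ) : F))) *
      Matrix.diagonal (fun i => (d i : F)) = B := by
  have h := cancel1 (diagUnit d : (Matrix (Fin n) (Fin n) F)ˣ) B
  rwa [diagUnit_coe, diagUnit_inv_coe] at h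

lemma diagCancel2 (d : Fin n → Fˣ) (B : Matrix (Fin n) (Fin n) F) :
    Matrix.diagonal (fun i => (((d i)⁻¹ : Fˣ) : F)) *
      (Matrix.diagonal (fun i => (d i : F)) * B *
        Matrix.diagonal (fun i => (d i : F))) *
      Matrix.diagonal (fun i => (((d i)⁻¹ : Fˣ) : F)) = B := by
  have h := cancel2 (diagUnit d : (Matrix (Fin n) (Fin n) F)ˣ) B
  rwa [diagUnit_coe, diagUnit_inv_coe] at h

lemma irr_generators (hF : ∃ x : F, x ≠ 0 ∧ x ≠ 1)
    (htrans : ∀ i j : Fin n, ∃ σ : Equiv.Perm (Fin n), IsGraphAut E σ ∧ σ i = j) :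
    IrreducibleMatSet
      (({P | ∃ σ : Equiv.Perm (Fin n), IsGraphAut E σ ∧
            (P : Matrix (Fin n) (Fin n) F) = σ.permMatrix F} ∪
         {D | ∃ d : Fin n → Fˣ,
            (D : Matrix (Fin n) (Fin n) F) = Matrix.diagonal (fun i => (d i : F))})
        : Set (Matrix (Fin n) (Fin n) F)ˣ) := by
  intro U hU
  rcases eq_or_ne U ⊥ with h | h
  · exact Or.inl h
  right
  obtain ⟨u, hu, hune⟩ := Submodule.exists_mem_ne_zero_of_ne_bot h
  obtain ⟨k, hk⟩ := Function.ne_iff.mp hune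
  obtain ⟨x, hx0, hx1⟩ := hF
  set d : Fin n → Fˣ := fun i => if i = k then Units.mk0 x hx0 else 1 with hd
  have hv := hU (diagUnit d) (Or.inr ⟨d, rfl⟩) u hu
  have hsub := sub_mem hv hu
  have hveq : Matrix.vecMul u ((diagUnit d : (Matrix (Fin n) (Fin n) F)ˣ) :
      Matrix (Fin n) (Fin n) F) - u =
        (u k * (x - 1)) • (Pi.single k (1 : F) : Fin n → F) := by
    funext j
    rw [diagUnit_coe]
    simp only [Matrix.vecMul_diagonal, Pi.sub_apply, Pi.smul_apply, smul_eq_mul,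
      Pi.single_apply, hd]
    by_cases hj : j = k
    · subst hj; simp [mul_sub]
    · simp [hj]
  have hc : u k * (x - 1) ≠ 0 :=
    mul_ne_zero (by simpa using hk) (sub_ne_zero.mpr hx1)
  have hsingle_k : Pi.single k (1 : F) ∈ U := by
    have := Submodule.smul_mem U (u k * (x - 1))⁻¹ hsub
    rwa [hveq, smul_smul, inv_mul_cancel₀ hc, one_smul] at this
  have hsingle : ∀ j : Fin n, Pi.single j (1 : F) ∈ U := by
    intro j
    obtain ⟨σ, hσ, hσk⟩ := htrans k j
    have hmem := hU (permUnit σ) (Or.inl ⟨σ, hσ, rfl⟩) _ hsingle_k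
    have heq : Matrix.vecMul (Pi.single k (1 : F)) ((permUnit σ : (Matrix (Fin n) (Fin n) F)ˣ) :
        Matrix (Fin n) (Fin n) F) = Pi.single j (1 : F) := by
      funext b
      rw [permUnit_coe]
      simp only [Matrix.single_vecMul, one_mul, PEquiv.toMatrix_apply,
        Equiv.toPEquiv_apply, Option.mem_def, Option.some.injEq, Pi.single_apply, hσk]
      by_cases hb : b = j
      · subst hb; simp [hσk]
      · simp [hσk, hb, Ne.symm hb]
    rwa [heq] at hmem
  rw [Submodule.eq_top_iff']
  intro w
  have hw : w = ∑ j : Fin n, w j • (Pi.single j (1 : F) : Fin n → F) := by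
    funext a
    simp [Finset.sum_apply, Pi.single_apply]
  rw [hw]
  exact Submodule.sum_mem _ fun j _ => Submodule.smul_mem _ _ (hsingle j)

end Aux

theorem stmt_17 (F : Type*) [Field F] (hF : ∃ x : F, x ≠ 0 ∧ x ≠ 1)
    (n : ℕ) (E : Finset (Fin n × Fin n))
    (htrans : ∀ i j : Fin n, ∃ σ : Equiv.Perm (Fin n), IsGraphAut E σ ∧ σ i = j) :
    IrreducibleMatSet (F := F) (n := n)
      ((Subgroup.closure
        (({P | ∃ σ : Equiv.Perm (Fin n), IsGraphAut E σ ∧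
            (P : Matrix (Fin n) (Fin n) F) = σ.permMatrix F} ∪
         {D | ∃ d : Fin n → Fˣ,
            (D : Matrix (Fin n) (Fin n) F) = Matrix.diagonal (fun i => (d i : F))}
          : Set (Matrix (Fin n) (Fin n) F)ˣ)) : Subgroup (Matrix (Fin n) (Fin n) F)ˣ) :
            Set (Matrix (Fin n) (Fin n) F)ˣ) ∧
    -- `S_G` is conjugacy irreducible
    IrreducibleMatSet (F := F) (n := n)
      {T | ∀ B : Matrix (Fin n) (Fin n) F,
        B ∈ graphSpace F E ↔
          (T : Matrix (Fin n) (Fin n) F) * B * ((T⁻¹ : (Matrix (Fin n) (Fin n) F)ˣ) :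
            Matrix (Fin n) (Fin n) F) ∈ graphSpace F E} ∧
    -- `S_G` is congruence irreducible
    IrreducibleMatSet (F := F) (n := n)
      {T | ∀ B : Matrix (Fin n) (Fin n) F,
        B ∈ graphSpace F E ↔
          (T : Matrix (Fin n) (Fin n) F) * B * (T : Matrix (Fin n) (Fin n) F)ᵀ ∈
            graphSpace F E} := by
  have hmain := irr_generators E hF htrans
  refine ⟨irrMono Subgroup.subset_closure hmain, irrMono ?_ hmain, irrMono ?_ hmain⟩
  · -- generators lie in the conjugation stabilizer
    rintro T (⟨σ, hσ, hT⟩ | ⟨d, hT⟩)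
    · have hTeq : T = permUnit σ := Units.ext hT
      subst hTeq
      intro B
      rw [permUnit_coe, permUnit_inv_coe]
      constructor
      · intro hB
        exact perm_forward E hσ B hB
      · intro hB
        have hback := perm_forward E (aut_inv E hσ) _ hB
        rw [inv_inv, permCancel1] at hback
        exact hback
    · have hTeq : T = diagUnit d := Units.ext hT
      subst hTeq
      intro B
      rw [diagUnit_coe, diagUnit_inv_coe]
      constructor
      · intro hB
        exact diag_forward E _ _ B hB
      · intro hB
        have hback := diag_forward E (fun i => (((d i)⁻¹ : Fˣ) : F)) (fun i => (d i : F)) _ hB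
        rw [diagCancel1] at hback
        exact hback
  · -- generators lie in the congruence stabilizer
    rintro T (⟨σ, hσ, hT⟩ | ⟨d, hT⟩)
    · have hTeq : T = permUnit σ := Units.ext hT
      subst hTeq
      intro B
      rw [permUnit_transpose, permUnit_coe]
      constructor
      · intro hB
        exact perm_forward E hσ B hB
      · intro hB
        have hback := perm_forward E (aut_inv E hσ) _ hB
        rw [inv_inv, permCancel1] at hback
        exact hback
    · have hTeq : T = diagUnit d := Units.ext hT
      subst hTeq
      intro B
      have htr : ((diagUnit d : (Matrix (Fin n) (Fin n) F)ˣ) :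
          Matrix (Fin n) (Fin n) F)ᵀ = Matrix.diagonal (fun i => (d i : F)) := by
        rw [diagUnit_coe, Matrix.diagonal_transpose]
      rw [htr, diagUnit_coe]
      constructor
      · intro hB
        exact diag_forward E _ _ B hB
      · intro hB
        have hback := diag_forward E (fun i => (((d i)⁻¹ : Fˣ) : F))
          (fun i => (((d i)⁻¹ : Fˣ) : F)) _ hB
        rw [diagCancel2] at hback
        exact hback
end
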